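/- arXiv:1807.07030 — 4 statements merged into one kernel-verified Lean document; each statement's English description precedes it below -/
import Mathlib

section
/- Let G be a finite simple graph and B ⊆ V(G). Then the ⌊Z⌋ propagation time of B in G equals the minimum of the standard propagation times of B over all spanning supergraphs of G: pt_⌊Z⌋(G;B) = min{ pt_Z(H;B) : H is a spanning supergraph of G }. -/
open SimpleGraph

namespace ZFT

variable {V : Type*} {α : Type*} {β : Type*}

/-! ### Standard zero forcing (simultaneous propagation) -/

/-- One round of simultaneous standard zero forcing: a blue vertex forces its
unique white neighbor. -/
def zStep (G : SimpleGraph V) (S : Set V) : Set V :=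
  S ∪ {w | ∃ u ∈ S, G.Adj u w ∧ ∀ x, G.Adj u x → x ∉ S → x = w}

/-- `B` is a standard zero forcing set of `G`. -/
def IsZeroForcingSet (G : SimpleGraph V) (B : Set V) : Prop :=
  ∃ t : ℕ, (zStep G)^[t] B = Set.univ

/-- The standard propagation time `pt_Z(G;B)` (`⊤` if `B` is not a zero forcing set). -/
noncomputable def ptZ (G : SimpleGraph V) (B : Set V) : ℕ∞ :=
  sInf {n : ℕ∞ | ∃ t : ℕ, n = t ∧ (zStep G)^[t] B = Set.univ}

/-- The standard throttling number `th_Z(G;B) = |B| + pt_Z(G;B)`. -/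
noncomputable def thZ (G : SimpleGraph V) (B : Set V) : ℕ∞ :=
  (B.ncard : ℕ∞) + ptZ G B

/-- The standard throttling number `th_Z(G)`. -/
noncomputable def thZgraph (G : SimpleGraph V) : ℕ∞ :=
  sInf {n : ℕ∞ | ∃ B : Set V, IsZeroForcingSet G B ∧ n = thZ G B}

/-- The standard zero forcing number `Z(G)`. -/
noncomputable def Znum (G : SimpleGraph V) : ℕ :=
  sInf {k : ℕ | ∃ B : Set V, IsZeroForcingSet G B ∧ B.ncard = k}

/-- The standard propagation time `pt_Z(G)`, minimized over minimum zero forcing sets. -/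
noncomputable def ptZgraph (G : SimpleGraph V) : ℕ∞ :=
  sInf {n : ℕ∞ | ∃ B : Set V, IsZeroForcingSet G B ∧ B.ncard = Znum G ∧ n = ptZ G B}

/-! ### Sets of standard forces -/

/-- Validity of a single standard force `u → w` when `blue` is the blue set. -/
def zForceValid (G : SimpleGraph V) (blue : Set V) (u w : V) : Prop :=
  u ∈ blue ∧ w ∉ blue ∧ G.Adj u w ∧ ∀ x, G.Adj u x → x ∉ blue → x = w

/-- Validity of a chronological list of standard forces starting from a blue set. -/
def zValidList (G : SimpleGraph V) : Set V → List (V × V) → Prop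
  | _, [] => True
  | blue, p :: L => zForceValid G blue p.1 p.2 ∧ zValidList G (insert p.2 blue) L

/-- The blue set after performing all forces in a list, starting from `B`. -/
def endBlue (B : Set V) (L : List (V × V)) : Set V :=
  B ∪ {w | ∃ u, (u, w) ∈ L}

/-- The set of vertices that have performed a force in a list. -/
def endForced (L : List (V × V)) : Set V := {u | ∃ w, (u, w) ∈ L}

/-- `F` is a set of standard forces of `B` in `G` (recorded from a maximal
chronological list of forces). -/
def IsZForceSet (G : SimpleGraph V) (B : Set V) (F : Set (V × V)) : Prop :=
  ∃ L : List (V × V), zValidList G B L ∧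
    (∀ u w, ¬ zForceValid G (endBlue B L) u w) ∧ F = {p | p ∈ L}

/-- The set of blue vertices at time `t` when the forces of `F` are performed at the
earliest possible time steps, starting from `B` blue. -/
def zBlueAt (G : SimpleGraph V) (F : Set (V × V)) (B : Set V) : ℕ → Set V
  | 0 => B
  | t + 1 =>
      zBlueAt G F B t ∪ {w | ∃ v, (v, w) ∈ F ∧ zForceValid G (zBlueAt G F B t) v w}

/-- The standard propagation time `pt_Z(G;F)` of a set of forces `F` of `B`. -/
noncomputable def ptZofF (G : SimpleGraph V) (F : Set (V × V)) (B : Set V) : ℕ∞ :=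
  sInf {n : ℕ∞ | ∃ t : ℕ, n = t ∧ zBlueAt G F B t = Set.univ}

/-! ### `⌊Z⌋` (minor monotone floor) forcing -/

/-- Validity of a single `⌊Z⌋` force `u → w`: `u` is blue and has not yet forced, `w`
is white, and either `w` is the unique white neighbor of `u`, or all neighbors of `u`
are blue (a hop). -/
def zfForceValid (G : SimpleGraph V) (blue forced : Set V) (u w : V) : Prop :=
  u ∈ blue ∧ w ∉ blue ∧ u ∉ forced ∧
    ((G.Adj u w ∧ ∀ x, G.Adj u x → x ∉ blue → x = w) ∨ ∀ x, G.Adj u x → x ∈ blue)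

/-- Validity of a chronological list of `⌊Z⌋` forces. -/
def zfValidList (G : SimpleGraph V) : Set V → Set V → List (V × V) → Prop
  | _, _, [] => True
  | blue, forced, p :: L =>
      zfForceValid G blue forced p.1 p.2 ∧
        zfValidList G (insert p.2 blue) (insert p.1 forced) L

/-- `F` is a set of `⌊Z⌋` forces of `B` in `G` (recorded from a maximal chronological
list of `⌊Z⌋` forces starting with `B` blue). -/
def IsZFForceSet (G : SimpleGraph V) (B : Set V) (F : Set (V × V)) : Prop :=
  ∃ L : List (V × V), zfValidList G B ∅ L ∧
    (∀ u w, ¬ zfForceValid G (endBlue B L) (endForced L) u w) ∧ F = {p | p ∈ L}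

/-- The set of blue vertices at time `t` when the `⌊Z⌋` forces of `F` are performed at
the earliest possible time steps, starting from `B` blue. -/
def zfBlueAt (G : SimpleGraph V) (F : Set (V × V)) (B : Set V) : ℕ → Set V
  | 0 => B
  | t + 1 =>
      zfBlueAt G F B t ∪
        {w | ∃ v, (v, w) ∈ F ∧ v ∈ zfBlueAt G F B t ∧ w ∉ zfBlueAt G F B t ∧
          (∀ w', (v, w') ∈ F → w' ∈ zfBlueAt G F B t → w' ∈ B) ∧
          ((G.Adj v w ∧ ∀ x, G.Adj v x → x ∉ zfBlueAt G F B t → x = w) ∨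
            ∀ x, G.Adj v x → x ∈ zfBlueAt G F B t)}

/-- The `⌊Z⌋` propagation time `pt_⌊Z⌋(G;F)` of a set of `⌊Z⌋` forces `F` of `B`. -/
noncomputable def ptZFofF (G : SimpleGraph V) (F : Set (V × V)) (B : Set V) : ℕ∞ :=
  sInf {n : ℕ∞ | ∃ t : ℕ, n = t ∧ zfBlueAt G F B t = Set.univ}

/-- The `⌊Z⌋` propagation time `pt_⌊Z⌋(G;B)`, minimized over sets of `⌊Z⌋` forces of `B`. -/
noncomputable def ptZF (G : SimpleGraph V) (B : Set V) : ℕ∞ :=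
  sInf {n : ℕ∞ | ∃ F : Set (V × V), IsZFForceSet G B F ∧ n = ptZFofF G F B}

/-- The `⌊Z⌋` throttling number `th_⌊Z⌋(G;B) = |B| + pt_⌊Z⌋(G;B)`. -/
noncomputable def thZF (G : SimpleGraph V) (B : Set V) : ℕ∞ :=
  (B.ncard : ℕ∞) + ptZF G B

/-- The `⌊Z⌋` throttling number `th_⌊Z⌋(G)`, minimized over all `B ⊆ V(G)`. -/
noncomputable def thZFgraph (G : SimpleGraph V) : ℕ∞ :=
  sInf {n : ℕ∞ | ∃ B : Set V, n = thZF G B}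

/-- `B` is a `⌊Z⌋` forcing set of `G`. -/
def IsZFForcingSet (G : SimpleGraph V) (B : Set V) : Prop :=
  ∃ F : Set (V × V), IsZFForceSet G B F ∧ B ∪ {w | ∃ u, (u, w) ∈ F} = Set.univ

/-- The `⌊Z⌋` forcing number `⌊Z⌋(G)`. -/
noncomputable def ZFnum (G : SimpleGraph V) : ℕ :=
  sInf {k : ℕ | ∃ B : Set V, IsZFForcingSet G B ∧ B.ncard = k}

/-- The `⌊Z⌋` propagation time `pt_⌊Z⌋(G)`, minimized over minimum `⌊Z⌋` forcing sets. -/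
noncomputable def ptZFgraph (G : SimpleGraph V) : ℕ∞ :=
  sInf {n : ℕ∞ | ∃ B : Set V, IsZFForcingSet G B ∧ B.ncard = ZFnum G ∧ n = ptZF G B}

/-! ### Contractions, minors, and products -/

/-- The graph obtained from `H` by contracting (all) the edges in `C`: its vertices are
the connected components of the spanning subgraph of `H` with edge set `C ∩ E(H)`, and
two distinct components are adjacent iff `H` has an edge between them. -/
def contractEdges (H : SimpleGraph α) (C : Set (Sym2 α)) :
    SimpleGraph (SimpleGraph.fromEdgeSet C ⊓ H).ConnectedComponent where
  Adj c d := c ≠ d ∧ ∃ a b, H.Adj a b ∧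
      (SimpleGraph.fromEdgeSet C ⊓ H).connectedComponentMk a = c ∧
      (SimpleGraph.fromEdgeSet C ⊓ H).connectedComponentMk b = d
  symm := ⟨by
    rintro c d ⟨hcd, a, b, hab, ha, hb⟩
    exact ⟨hcd.symm, b, a, hab.symm, hb, ha⟩⟩
  loopless := ⟨fun c h => h.1 rfl⟩

/-- `G` is a minor of `H`: `G` is isomorphic to a subgraph of a graph obtained from an
induced subgraph of `H` by contracting a set of edges. -/
def IsMinor (G : SimpleGraph β) (H : SimpleGraph α) : Prop :=
  ∃ (s : Set α) (C : Set (Sym2 s))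
    (G'' : SimpleGraph (SimpleGraph.fromEdgeSet C ⊓ H.induce s).ConnectedComponent),
      G'' ≤ contractEdges (H.induce s) C ∧ Nonempty (G ≃g G'')

/-- The Cartesian product `K_a □ P_{b+1}`. -/
def prodKP (a b : ℕ) : SimpleGraph (Fin a × Fin (b + 1)) :=
  (⊤ : SimpleGraph (Fin a)) □ SimpleGraph.pathGraph (b + 1)

/-- The path edges of `K_a □ P_{b+1}` (edges within the copies of `P_{b+1}`). -/
def pathEdges (a b : ℕ) : Set (Sym2 (Fin a × Fin (b + 1))) :=
  {e | ∃ (i : Fin a) (j j' : Fin (b + 1)),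
    (SimpleGraph.pathGraph (b + 1)).Adj j j' ∧ e = s((i, j), (i, j'))}

/-- The complete edges of `K_a □ P_{b+1}` (edges within the copies of `K_a`). -/
def completeEdges (a b : ℕ) : Set (Sym2 (Fin a × Fin (b + 1))) :=
  {e | ∃ (i i' : Fin a) (j : Fin (b + 1)), i ≠ i' ∧ e = s((i, j), (i', j))}

/-- The star `K_{1,n-1}` on `n` vertices: vertex `0` is adjacent to all others. -/
def starGraph (n : ℕ) : SimpleGraph (Fin n) where
  Adj i j := i ≠ j ∧ ((i : ℕ) = 0 ∨ (j : ℕ) = 0)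
  symm := ⟨by rintro i j ⟨h1, h2⟩; exact ⟨h1.symm, h2.symm⟩⟩
  loopless := ⟨fun i h => h.1 rfl⟩

/-- The independence number `α(G)`. -/
noncomputable def indepNum (G : SimpleGraph V) : ℕ :=
  sSup {k : ℕ | ∃ s : Set V, (∀ a ∈ s, ∀ b ∈ s, a ≠ b → ¬ G.Adj a b) ∧ s.ncard = k}



/-! ### Auxiliary lemmas -/

lemma zStep_iter_le (G : SimpleGraph V) (B : Set V) {k m : ℕ} (h : k ≤ m) :
    (zStep G)^[k] B ⊆ (zStep G)^[m] B := by
  induction h with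
  | refl => exact fun x hx => hx
  | step h ih =>
      refine ih.trans ?_
      rw [Function.iterate_succ_apply']
      exact Set.subset_union_left

lemma zfValidList_mem (G : SimpleGraph V) :
    ∀ (L : List (V × V)) (bl fo : Set V), zfValidList G bl fo L →
      ∀ p ∈ L, p.1 ∉ fo ∧ p.2 ∉ bl ∧ p.1 ≠ p.2 := by
  intro L
  induction L with
  | nil => intro bl fo _ p hp; simp at hp
  | cons q L ih =>
      intro bl fo hv p hp
      obtain ⟨hq, hL⟩ := hv
      rw [List.mem_cons] at hp
      rcases hp with rfl | hp
      · exact ⟨hq.2.2.1, hq.2.1, fun h => hq.2.1 (h ▸ hq.1)⟩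
      · have hthis := ih (insert q.2 bl) (insert q.1 fo) hL p hp
        exact ⟨fun h => hthis.1 (Set.mem_insert_iff.mpr (Or.inr h)),
          fun h => hthis.2.1 (Set.mem_insert_iff.mpr (Or.inr h)), hthis.2.2⟩

lemma zfValidList_funcFst (G : SimpleGraph V) :
    ∀ (L : List (V × V)) (bl fo : Set V), zfValidList G bl fo L →
      ∀ u w1 w2, (u, w1) ∈ L → (u, w2) ∈ L → w1 = w2 := by
  intro L
  induction L with
  | nil => intro bl fo _ u w1 w2 h1; simp at h1
  | cons q L ih =>
      intro bl fo hv u w1 w2 h1 h2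
      obtain ⟨hq, hL⟩ := hv
      rw [List.mem_cons] at h1 h2
      rcases h1 with h1 | h1 <;> rcases h2 with h2 | h2
      · have := h1.trans h2.symm
        exact congrArg Prod.snd this
      · exfalso
        have := (zfValidList_mem G L _ _ hL (u, w2) h2).1
        exact this (by rw [← h1]; exact Set.mem_insert _ _)
      · exfalso
        have := (zfValidList_mem G L _ _ hL (u, w1) h1).1
        exact this (by rw [← h2]; exact Set.mem_insert _ _)
      · exact ih _ _ hL u w1 w2 h1 h2

lemma zfValidList_injSnd (G : SimpleGraph V) :
    ∀ (L : List (V × V)) (bl fo : Set V), zfValidList G bl fo L →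
      ∀ u1 u2 w, (u1, w) ∈ L → (u2, w) ∈ L → u1 = u2 := by
  intro L
  induction L with
  | nil => intro bl fo _ u1 u2 w h1; simp at h1
  | cons q L ih =>
      intro bl fo hv u1 u2 w h1 h2
      obtain ⟨hq, hL⟩ := hv
      rw [List.mem_cons] at h1 h2
      rcases h1 with h1 | h1 <;> rcases h2 with h2 | h2
      · have := h1.trans h2.symm
        exact congrArg Prod.fst this
      · exfalso
        have := (zfValidList_mem G L _ _ hL (u2, w) h2).2.1
        exact this (by rw [← h1]; exact Set.mem_insert _ _)
      · exfalso
        have := (zfValidList_mem G L _ _ hL (u1, w) h1).2.1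
        exact this (by rw [← h2]; exact Set.mem_insert _ _)
      · exact ih _ _ hL u1 u2 w h1 h2

/-- From a set of `⌊Z⌋` forces of `B` in `G`, build a spanning supergraph `H` whose
standard process dominates the `⌊Z⌋` schedule. -/
lemma exists_supergraph (G : SimpleGraph V) (B : Set V) (F : Set (V × V))
    (hF : IsZFForceSet G B F) :
    ∃ H : SimpleGraph V, G ≤ H ∧ ∀ t : ℕ, zfBlueAt G F B t = Set.univ →
      (zStep H)^[t] B = Set.univ := by
  obtain ⟨L, hL, hmax, rfl⟩ := hF
  have hmemL : ∀ p ∈ L, p.2 ∉ B ∧ p.1 ≠ p.2 := fun p hp =>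
    ⟨(zfValidList_mem G L B ∅ hL p hp).2.1, (zfValidList_mem G L B ∅ hL p hp).2.2⟩
  have hfun : ∀ u w1 w2, (u, w1) ∈ L → (u, w2) ∈ L → w1 = w2 :=
    zfValidList_funcFst G L B ∅ hL
  have hinj : ∀ u1 u2 w, (u1, w) ∈ L → (u2, w) ∈ L → u1 = u2 :=
    zfValidList_injSnd G L B ∅ hL
  set Fs : Set (V × V) := {p | p ∈ L} with hFsdef
  have hFmem : ∀ p : V × V, p ∈ Fs ↔ p ∈ L := fun p => Iff.rfl
  set H : SimpleGraph V := G ⊔ SimpleGraph.fromEdgeSet {e | ∃ p ∈ L, e = s(p.1, p.2)}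
    with hHdef
  have hGH : G ≤ H := le_sup_left
  have hforcer : ∀ t x y, (x, y) ∈ L → y ∈ zfBlueAt G Fs B t → x ∈ zfBlueAt G Fs B t := by
    intro t
    induction t with
    | zero => intro x y hxy hy; exact absurd hy (hmemL _ hxy).1
    | succ t ih =>
        intro x y hxy hy
        simp only [zfBlueAt, Set.mem_union, Set.mem_setOf_eq] at hy ⊢
        rcases hy with hy | hy
        · exact Or.inl (ih x y hxy hy)
        · obtain ⟨v', hv'F, hv'blue, -, -, -⟩ := hy
          have hve : v' = x := hinj v' x y hv'F hxy
          exact Or.inl (hve ▸ hv'blue)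
  have key : ∀ t, zfBlueAt G Fs B t ⊆ (zStep H)^[t] B := by
    intro t
    induction t with
    | zero => exact fun x hx => hx
    | succ t ih =>
        intro w hw
        rw [Function.iterate_succ_apply']
        simp only [zfBlueAt, Set.mem_union, Set.mem_setOf_eq] at hw
        simp only [zStep, Set.mem_union, Set.mem_setOf_eq]
        rcases hw with hw | hw
        · exact Or.inl (ih hw)
        · obtain ⟨v, hvF, hvblue, hwwhite, -, hcond⟩ := hw
          refine Or.inr ⟨v, ih hvblue, ?_, ?_⟩
          · exact Or.inr ((SimpleGraph.fromEdgeSet_adj _).mpr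
              ⟨⟨(v, w), hvF, rfl⟩, (hmemL _ hvF).2⟩)
          · intro x hadj hx
            have hxzf : x ∉ zfBlueAt G Fs B t := fun hc => hx (ih hc)
            rcases hadj with hadj | hadj
            · rcases hcond with ⟨-, huniq⟩ | hall
              · exact huniq x hadj hxzf
              · exact absurd (hall x hadj) hxzf
            · rw [SimpleGraph.fromEdgeSet_adj] at hadj
              obtain ⟨⟨p, hpL, hpe⟩, hne⟩ := hadj
              rcases Sym2.eq_iff.mp hpe with ⟨h1, h2⟩ | ⟨h1, h2⟩
              · have hvx : (v, x) ∈ L := by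
                  have hpeq : (v, x) = p := by rw [h1, h2]
                  exact hpeq ▸ hpL
                exact hfun v x w hvx hvF
              · exfalso
                have hxv : (x, v) ∈ L := by
                  have hpeq : (x, v) = p := by rw [h1, h2]
                  exact hpeq ▸ hpL
                exact hxzf (hforcer t x v hxv hvblue)
  exact ⟨H, hGH, fun t ht => Set.eq_univ_of_univ_subset (ht ▸ key t)⟩

/-- If a spanning supergraph's standard process finishes by time `t`, then
`pt_⌊Z⌋(G;B) ≤ t`. -/
lemma ptZF_le_of {V : Type*} [Fintype V] {G H : SimpleGraph V} (hGH : G ≤ H)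
    (B : Set V) (t : ℕ) (ht : (zStep H)^[t] B = Set.univ) :
    ptZF G B ≤ (t : ℕ∞) := by
  classical
  have hall : ∀ w : V, ∃ k, w ∈ (zStep H)^[k] B := fun w => ⟨t, ht ▸ Set.mem_univ w⟩
  set s : V → ℕ := fun w => Nat.find (hall w) with hsdef
  have hspec : ∀ w, w ∈ (zStep H)^[s w] B := fun w => Nat.find_spec (hall w)
  have hmem_iff : ∀ w k, w ∈ (zStep H)^[k] B ↔ s w ≤ k := by
    intro w k
    constructor
    · intro h; exact Nat.find_min' (hall w) h
    · intro h; exact zStep_iter_le H B h (hspec w)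
  have hs_pos : ∀ w, w ∉ B → 1 ≤ s w := by
    intro w hw
    rcases Nat.eq_zero_or_pos (s w) with h0 | h1
    · exact absurd (by have hsp := hspec w; rwa [h0] at hsp) hw
    · exact h1
  have hforce : ∀ w, w ∉ B → ∃ u, u ∈ (zStep H)^[s w - 1] B ∧ H.Adj u w ∧
      ∀ x, H.Adj u x → x ∉ (zStep H)^[s w - 1] B → x = w := by
    intro w hw
    have h1 : 1 ≤ s w := hs_pos w hw
    have h2 : w ∈ (zStep H)^[s w - 1 + 1] B := by
      rw [Nat.sub_add_cancel h1]; exact hspec w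
    have h3 : w ∉ (zStep H)^[s w - 1] B := by
      rw [hmem_iff]; omega
    rw [Function.iterate_succ_apply'] at h2
    simp only [zStep, Set.mem_union, Set.mem_setOf_eq] at h2
    rcases h2 with h2 | h2
    · exact absurd h2 h3
    · exact h2
  choose! v hv1 hv2 hv3 using hforce
  have hinj : ∀ w1 w2, w1 ∉ B → w2 ∉ B → v w1 = v w2 → w1 = w2 := by
    have hkey : ∀ w1 w2, w1 ∉ B → w2 ∉ B → s w1 ≤ s w2 → v w1 = v w2 → w1 = w2 := by
      intro w1 w2 h1 h2 hle he
      by_contra hne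
      have hadj : H.Adj (v w1) w2 := he ▸ hv2 w2 h2
      have hnm : w2 ∉ (zStep H)^[s w1 - 1] B := by
        intro hmem
        rw [hmem_iff] at hmem
        have := hs_pos w1 h1; omega
      exact hne ((hv3 w1 h1 w2 hadj hnm).symm)
    intro w1 w2 h1 h2 he
    rcases le_total (s w1) (s w2) with h | h
    · exact hkey w1 w2 h1 h2 h he
    · exact (hkey w2 w1 h2 h1 h he.symm).symm
  -- the sorted list of white vertices
  set M0 : List V := (Finset.univ.filter (fun w => w ∉ B)).toList.mergeSort
      (fun a b => decide (s a ≤ s b)) with hM0def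
  have hM0mem : ∀ w : V, w ∈ M0 ↔ w ∉ B := by
    intro w
    rw [hM0def, List.mem_mergeSort, Finset.mem_toList, Finset.mem_filter]
    simp
  have hM0nd : M0.Nodup := ((List.mergeSort_perm _ _).nodup_iff).mpr (Finset.nodup_toList _)
  have hM0sorted : List.Pairwise (fun a b => s a ≤ s b) M0 := by
    have hs := List.pairwise_mergeSort (le := fun a b => decide (s a ≤ s b))
      (fun a b c hab hbc => by
        simp only [decide_eq_true_eq] at hab hbc ⊢; omega)
      (fun a b => by
        simp only [Bool.or_eq_true, decide_eq_true_eq]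
        exact Nat.le_total (s a) (s b))
      ((Finset.univ.filter (fun w => w ∉ B)).toList)
    refine hs.imp ?_
    intro a b h
    simpa using h
  -- validity of the sorted force list, by induction with generalized blue/forced sets
  have hvalid : ∀ (M : List V) (bl fo : Set V), M.Nodup → (∀ w ∈ M, w ∉ B) →
      List.Pairwise (fun a b => s a ≤ s b) M →
      (∀ w ∈ M, ∀ x, x ∈ (zStep H)^[s w - 1] B → x ∉ M → x ∈ bl) →
      (∀ w ∈ M, w ∉ bl) →
      (∀ w ∈ M, v w ∉ fo) →
      zfValidList G bl fo (M.map (fun w => (v w, w))) := by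
    intro M
    induction M with
    | nil => intro bl fo _ _ _ _ _ _; trivial
    | cons w M ih =>
        intro bl fo hnd hB hpw hblue hwhite hfo
        have hwB : w ∉ B := hB w List.mem_cons_self
        have hw1 : 1 ≤ s w := hs_pos w hwB
        have hvw_notM : v w ∉ (w :: M) := by
          intro hmem
          have hvws : s (v w) ≤ s w - 1 := (hmem_iff _ _).mp (hv1 w hwB)
          rcases List.mem_cons.mp hmem with h | h
          · have hww := hv1 w hwB
            rw [h, hmem_iff] at hww; omega
          · have := List.rel_of_pairwise_cons hpw h
            omega
        have huniq : ∀ x, G.Adj (v w) x → x ∉ bl → x = w := by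
          intro x hadj hxbl
          by_contra hxw
          have hxH : H.Adj (v w) x := hGH hadj
          have hxstep : x ∉ (zStep H)^[s w - 1] B := by
            intro hxs
            by_cases hxM : x ∈ w :: M
            · rcases List.mem_cons.mp hxM with h | h
              · exact hxw h
              · have hpair := List.rel_of_pairwise_cons hpw h
                have hle := (hmem_iff x _).mp hxs
                omega
            · exact hxbl (hblue w List.mem_cons_self x hxs hxM)
          exact hxw (hv3 w hwB x hxH hxstep)
        refine ⟨⟨hblue w List.mem_cons_self (v w) (hv1 w hwB) hvw_notM,
          hwhite w List.mem_cons_self, hfo w List.mem_cons_self, ?_⟩, ?_⟩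
        · by_cases hG : G.Adj (v w) w
          · exact Or.inl ⟨hG, huniq⟩
          · refine Or.inr fun x hadj => ?_
            by_contra hx
            exact hG ((huniq x hadj hx) ▸ hadj)
        · refine ih (insert w bl) (insert (v w) fo) (List.nodup_cons.mp hnd).2
            (fun a ha => hB a (List.mem_cons_of_mem _ ha))
            (List.pairwise_cons.mp hpw).2 ?_ ?_ ?_
          · intro w' hw' x hxs hxM
            by_cases hxw : x = w
            · exact hxw ▸ Set.mem_insert _ _
            · refine Set.mem_insert_of_mem _ (hblue w' (List.mem_cons_of_mem _ hw') x hxs ?_)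
              intro h
              rcases List.mem_cons.mp h with h | h
              · exact hxw h
              · exact hxM h
          · intro w' hw' hmem
            rcases Set.mem_insert_iff.mp hmem with h | h
            · exact (List.nodup_cons.mp hnd).1 (h ▸ hw')
            · exact hwhite w' (List.mem_cons_of_mem _ hw') h
          · intro w' hw' hmem
            rcases Set.mem_insert_iff.mp hmem with h | h
            · exact (List.nodup_cons.mp hnd).1
                ((hinj w' w (hB w' (List.mem_cons_of_mem _ hw')) hwB h) ▸ hw')
            · exact hfo w' (List.mem_cons_of_mem _ hw') h
  set L : List (V × V) := M0.map (fun w => (v w, w)) with hLdef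
  have hLvalid : zfValidList G B ∅ L :=
    hvalid M0 B ∅ hM0nd (fun w hw => (hM0mem w).mp hw) hM0sorted
      (fun w _ x _ hxM => by_contra fun hxB => hxM ((hM0mem x).mpr hxB))
      (fun w hw => (hM0mem w).mp hw) (fun w _ => Set.notMem_empty _)
  have hend : endBlue B L = Set.univ := by
    apply Set.eq_univ_of_forall
    intro x
    by_cases hx : x ∈ B
    · exact Set.mem_union_left _ hx
    · exact Set.mem_union_right _ ⟨v x, List.mem_map.mpr ⟨x, (hM0mem x).mpr hx, rfl⟩⟩
  have hmax : ∀ u w, ¬ zfForceValid G (endBlue B L) (endForced L) u w := by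
    intro u w h
    exact h.2.1 (by rw [hend]; trivial)
  set F : Set (V × V) := {p | p ∈ L} with hFdef
  have hFset : IsZFForceSet G B F := ⟨L, hLvalid, hmax, rfl⟩
  have hsub : ∀ k, (zStep H)^[k] B ⊆ zfBlueAt G F B k := by
    intro k
    induction k with
    | zero => exact fun x hx => hx
    | succ k ih =>
        intro w hw
        simp only [zfBlueAt, Set.mem_union, Set.mem_setOf_eq]
        by_cases hwf : w ∈ zfBlueAt G F B k
        · exact Or.inl hwf
        · have hwk : w ∉ (zStep H)^[k] B := fun h => hwf (ih h)
          have hwB : w ∉ B := fun h => hwk (zStep_iter_le H B (Nat.zero_le k) h)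
          have hsw : s w = k + 1 := by
            have h1 := (hmem_iff w (k + 1)).mp hw
            have h2 : ¬ s w ≤ k := fun h => hwk ((hmem_iff w k).mpr h)
            omega
          have hsw1 : s w - 1 = k := by omega
          have hvwF : (v w, w) ∈ F := List.mem_map.mpr ⟨w, (hM0mem w).mpr hwB, rfl⟩
          refine Or.inr ⟨v w, hvwF, ?_, hwf, ?_, ?_⟩
          · exact ih (hsw1 ▸ hv1 w hwB)
          · intro w' hw'F hw'blue
            exfalso
            obtain ⟨w'', hw''M, heq⟩ := List.mem_map.mp hw'F
            have h1 : w'' = w' := congrArg Prod.snd heq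
            have h2 : v w'' = v w := congrArg Prod.fst heq
            have hww : w' = w := hinj w' w (h1 ▸ (hM0mem w'').mp hw''M) hwB (h1 ▸ h2)
            exact hwf (hww ▸ hw'blue)
          · have huniq : ∀ x, G.Adj (v w) x → x ∉ zfBlueAt G F B k → x = w := by
              intro x hadj hx
              refine hv3 w hwB x (hGH hadj) ?_
              rw [hsw1]
              exact fun hc => hx (ih hc)
            by_cases hG : G.Adj (v w) w
            · exact Or.inl ⟨hG, huniq⟩
            · refine Or.inr fun x hadj => ?_
              by_contra hx
              exact hG ((huniq x hadj hx) ▸ hadj)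
  have huniv : zfBlueAt G F B t = Set.univ :=
    Set.eq_univ_of_univ_subset (ht ▸ hsub t)
  calc ptZF G B ≤ ptZFofF G F B := sInf_le ⟨F, hFset, rfl⟩
    _ ≤ (t : ℕ∞) := sInf_le ⟨t, rfl, huniv⟩


/-- `pt_⌊Z⌋(G;B) = min{ pt_Z(H;B) : H a spanning supergraph of G }`. -/
theorem stmt0 {V : Type*} [Fintype V] (G : SimpleGraph V) (B : Set V) :
    ptZF G B = sInf {n : ℕ∞ | ∃ H : SimpleGraph V, G ≤ H ∧ n = ptZ H B} := by
  apply le_antisymm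
  · refine le_sInf ?_
    rintro n ⟨H, hGH, rfl⟩
    refine le_sInf ?_
    rintro m ⟨t, rfl, ht⟩
    exact ptZF_le_of hGH B t ht
  · refine le_sInf ?_
    rintro n ⟨F, hF, rfl⟩
    refine le_sInf ?_
    rintro m ⟨t, rfl, ht⟩
    obtain ⟨H, hGH, hstep⟩ := exists_supergraph G B F hF
    calc sInf {n : ℕ∞ | ∃ H : SimpleGraph V, G ≤ H ∧ n = ptZ H B}
        ≤ ptZ H B := sInf_le ⟨H, hGH, rfl⟩
      _ ≤ (t : ℕ∞) := sInf_le ⟨t, rfl, hstep t ht⟩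

end ZFT
end

section
/- Let G be a finite simple graph. Then pt_⌊Z⌋(G) = min{ pt_Z(H) : H is a spanning supergraph of G with Z(H) = ⌊Z⌋(G) }, where pt_Z(H) is the minimum of pt_Z(H;B) over all minimum standard zero forcing sets B of H. -/
open SimpleGraph

namespace ZFT

variable {V : Type*} {α : Type*} {β : Type*}

/-! ### Auxiliary lemmas -/

lemma zStep_subset (G : SimpleGraph V) (S : Set V) : S ⊆ zStep G S :=
  Set.subset_union_left

lemma zStep_iterate_mono (G : SimpleGraph V) (B : Set V) :
    Monotone (fun t => (zStep G)^[t] B) :=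
  monotone_nat_of_le_succ fun n => by
    rw [Function.iterate_succ_apply']
    exact zStep_subset G _

lemma zfBlueAt_succ (G : SimpleGraph V) (F : Set (V × V)) (B : Set V) (t : ℕ) :
    zfBlueAt G F B (t + 1) =
      zfBlueAt G F B t ∪
        {w | ∃ v, (v, w) ∈ F ∧ v ∈ zfBlueAt G F B t ∧ w ∉ zfBlueAt G F B t ∧
          (∀ w', (v, w') ∈ F → w' ∈ zfBlueAt G F B t → w' ∈ B) ∧
          ((G.Adj v w ∧ ∀ x, G.Adj v x → x ∉ zfBlueAt G F B t → x = w) ∨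
            ∀ x, G.Adj v x → x ∈ zfBlueAt G F B t)} := rfl

lemma zfBlueAt_mono (G : SimpleGraph V) (F : Set (V × V)) (B : Set V) :
    Monotone (zfBlueAt G F B) :=
  monotone_nat_of_le_succ fun n => by
    rw [zfBlueAt_succ]
    exact Set.subset_union_left

lemma zfBlueAt_mem (G : SimpleGraph V) (F : Set (V × V)) (B : Set V) :
    ∀ t, ∀ x ∈ zfBlueAt G F B t, x ∈ B ∨ ∃ v, (v, x) ∈ F ∧ v ∈ zfBlueAt G F B t := by
  intro t
  induction t with
  | zero => exact fun x hx => Or.inl hx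
  | succ n ih =>
    intro x hx
    rw [zfBlueAt_succ] at hx
    rcases hx with hx | ⟨v, hvF, hvb, -⟩
    · rcases ih x hx with h | ⟨v, hvF, hvb⟩
      · exact Or.inl h
      · exact Or.inr ⟨v, hvF, zfBlueAt_mono G F B (Nat.le_succ n) hvb⟩
    · exact Or.inr ⟨v, hvF, zfBlueAt_mono G F B (Nat.le_succ n) hvb⟩

lemma nodup_map_inj {γ δ : Type*} {g : γ → δ} :
    ∀ {l : List γ}, (l.map g).Nodup → ∀ p ∈ l, ∀ q ∈ l, g p = g q → p = q := by
  intro l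
  induction l with
  | nil => simp
  | cons r l ih =>
    intro h p hp q hq hpq
    rw [List.map_cons, List.nodup_cons] at h
    rcases List.mem_cons.mp hq with rfl | hq'
    · rcases List.mem_cons.mp hp with rfl | hp'
      · rfl
      · exact (h.1 (List.mem_map.mpr ⟨p, hp', hpq⟩)).elim
    · rcases List.mem_cons.mp hp with rfl | hp'
      · exact (h.1 (List.mem_map.mpr ⟨q, hq', hpq.symm⟩)).elim
      · exact ih h.2 p hp' q hq' hpq

lemma zfValidList_facts (G : SimpleGraph V) :
    ∀ (L : List (V × V)) (blue forced : Set V), zfValidList G blue forced L →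
      (∀ p ∈ L, p.1 ∉ forced ∧ p.2 ∉ blue) ∧
      (L.map Prod.fst).Nodup ∧ (L.map Prod.snd).Nodup := by
  intro L
  induction L with
  | nil => simp
  | cons p L ih =>
    intro blue forced hv
    obtain ⟨hp, htail⟩ := hv
    obtain ⟨hmem, hfst, hsnd⟩ := ih _ _ htail
    refine ⟨?_, ?_, ?_⟩
    · rintro q hq
      rcases List.mem_cons.mp hq with rfl | hq
      · exact ⟨hp.2.2.1, hp.2.1⟩
      · exact ⟨fun h => (hmem q hq).1 (Set.mem_insert_of_mem _ h),
          fun h => (hmem q hq).2 (Set.mem_insert_of_mem _ h)⟩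
    · refine List.nodup_cons.mpr ⟨?_, hfst⟩
      intro hmemf
      rcases List.mem_map.mp hmemf with ⟨q, hq, hq1⟩
      exact (hmem q hq).1 (by rw [hq1]; exact Set.mem_insert _ _)
    · refine List.nodup_cons.mpr ⟨?_, hsnd⟩
      intro hmemf
      rcases List.mem_map.mp hmemf with ⟨q, hq, hq2⟩
      exact (hmem q hq).2 (by rw [hq2]; exact Set.mem_insert _ _)

lemma zf_to_std (G : SimpleGraph V) (B : Set V) (F : Set (V × V))
    (hF : IsZFForceSet G B F) :
    ∀ t, zfBlueAt G F B t ⊆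
      (zStep (G ⊔ SimpleGraph.fromEdgeSet {e | ∃ p ∈ F, e = s(p.1, p.2)}))^[t] B := by
  classical
  obtain ⟨L, hL, -, hFeq⟩ := hF
  have hmemF : ∀ p, p ∈ F ↔ p ∈ L := fun p => by rw [hFeq]; rfl
  obtain ⟨hmem, hfst, hsnd⟩ := zfValidList_facts G L B ∅ hL
  have hsrcF : ∀ p ∈ F, ∀ q ∈ F, p.1 = q.1 → p = q := fun p hp q hq h =>
    nodup_map_inj hfst p ((hmemF p).mp hp) q ((hmemF q).mp hq) h
  have htgtF : ∀ p ∈ F, ∀ q ∈ F, p.2 = q.2 → p = q := fun p hp q hq h =>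
    nodup_map_inj hsnd p ((hmemF p).mp hp) q ((hmemF q).mp hq) h
  have htgtB : ∀ p ∈ F, p.2 ∉ B := fun p hp => (hmem p ((hmemF p).mp hp)).2
  set H := G ⊔ SimpleGraph.fromEdgeSet {e | ∃ p ∈ F, e = s(p.1, p.2)} with hH
  intro t
  induction t with
  | zero => exact fun x hx => hx
  | succ n ih =>
    intro x hx
    rw [Function.iterate_succ_apply']
    rw [zfBlueAt_succ] at hx
    rcases hx with hx | hx
    · exact zStep_subset H _ (ih hx)
    · obtain ⟨v, hvF, hvb, hxb, -, hrule⟩ := hx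
      apply Set.mem_union_right
      refine ⟨v, ih hvb, ?_, ?_⟩
      · refine (SimpleGraph.sup_adj _ _ _ _).mpr (Or.inr ?_)
        rw [SimpleGraph.fromEdgeSet_adj]
        exact ⟨⟨(v, x), hvF, rfl⟩, fun h => hxb (h ▸ hvb)⟩
      · intro y hy hyS
        have hynb : y ∉ zfBlueAt G F B n := fun h => hyS (ih h)
        rcases (SimpleGraph.sup_adj _ _ _ _).mp hy with hyG | hyE
        · rcases hrule with ⟨-, hu⟩ | hall
          · exact hu y hyG hynb
          · exact (hynb (hall y hyG)).elim
        · rw [SimpleGraph.fromEdgeSet_adj] at hyE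
          obtain ⟨⟨⟨pa, pb⟩, hpF, hpe⟩, -⟩ := hyE
          rcases Sym2.eq_iff.mp hpe with ⟨h1, h2⟩ | ⟨h1, h2⟩
        -- case 1 : v = pa, y = pb
          · have hpeq : (v, x) = (pa, pb) := hsrcF _ hvF _ hpF h1
            rw [Prod.mk.injEq] at hpeq
            rw [h2, ← hpeq.2]
        -- case 2 : v = pb, y = pa
          · have hvB : v ∉ B := by
              rw [h1]; exact htgtB _ hpF
            rcases zfBlueAt_mem G F B n v hvb with h | ⟨v', hv'F, hv'b⟩
            · exact (hvB h).elim
            · have hpeq : (v', v) = (pa, pb) := htgtF _ hv'F _ hpF h1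
              rw [Prod.mk.injEq] at hpeq
              rw [h2, ← hpeq.1] at hynb
              exact (hynb hv'b).elim

lemma std_to_zf [Fintype V] {G H : SimpleGraph V} (hGH : G ≤ H)
    (B : Set V) (T : ℕ) (hT : (zStep H)^[T] B = Set.univ) :
    ∃ F : Set (V × V), IsZFForceSet G B F ∧
      B ∪ {w | ∃ u, (u, w) ∈ F} = Set.univ ∧
      ∀ t, (zStep H)^[t] B ⊆ zfBlueAt G F B t := by
  classical
  set S : ℕ → Set V := fun t => (zStep H)^[t] B with hSdef
  have hmono : Monotone S := zStep_iterate_mono H B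
  have hSsucc : ∀ m, S (m + 1) = zStep H (S m) := fun m => Function.iterate_succ_apply' _ _ _
  have key : ∀ w : V, ∃ (t : ℕ) (u : V), w ∉ B →
      w ∉ S t ∧ u ∈ S t ∧ H.Adj u w ∧ ∀ x, H.Adj u x → x ∉ S t → x = w := by
    intro w
    by_cases hwB : w ∈ B
    · exact ⟨0, w, fun h => absurd hwB h⟩
    · have hex : ∃ t, w ∈ S t := ⟨T, show w ∈ (zStep H)^[T] B by rw [hT]; trivial⟩
      have hn := Nat.find_spec hex
      have hn0 : Nat.find hex ≠ 0 := fun h => hwB (by rw [h] at hn; exact hn)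
      obtain ⟨m, hm⟩ := Nat.exists_eq_succ_of_ne_zero hn0
      have hwm : w ∉ S m := Nat.find_min hex (by omega)
      have hwm1 : w ∈ zStep H (S m) := by
        have hn' := hm ▸ hn
        rw [← hSsucc]
        exact hn'
      simp only [zStep, Set.mem_union, Set.mem_setOf_eq] at hwm1
      rcases hwm1 with h | ⟨u, hu, hadj, huniq⟩
      · exact absurd h hwm
      · exact ⟨m, u, fun _ => ⟨hwm, hu, hadj, huniq⟩⟩
  choose τ f hkey using key
  have hinj : ∀ w, w ∉ B → ∀ w', w' ∉ B → f w = f w' → w = w' := by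
    intro w hw w' hw' hff
    rcases le_total (τ w) (τ w') with h | h
    · obtain ⟨hwS, -, -, huniq⟩ := hkey w hw
      obtain ⟨hw'S, -, hadj', -⟩ := hkey w' hw'
      exact (huniq w' (by rw [hff]; exact hadj') fun hmem => hw'S (hmono h hmem)).symm
    · obtain ⟨hwS, -, hadj, -⟩ := hkey w hw
      obtain ⟨hw'S, -, -, huniq'⟩ := hkey w' hw'
      exact huniq' w (by rw [← hff]; exact hadj) fun hmem => hwS (hmono h hmem)
  set F : Set (V × V) := {p | p.2 ∉ B ∧ p.1 = f p.2} with hFdef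
  have hcov : ∀ t, S t ⊆ zfBlueAt G F B t := by
    intro t
    induction t with
    | zero => exact fun x hx => hx
    | succ n ih =>
      intro x hx
      rw [zfBlueAt_succ]
      by_cases hxb : x ∈ zfBlueAt G F B n
      · exact Set.mem_union_left _ hxb
      by_cases hxB : x ∈ B
      · exact (hxb (zfBlueAt_mono G F B (Nat.zero_le n) hxB)).elim
      obtain ⟨hxS, hfS, hfadj, huniq⟩ := hkey x hxB
      have hτ : τ x ≤ n := by
        by_contra h
        exact hxS (hmono (by omega : n + 1 ≤ τ x) hx)
      refine Set.mem_union_right _ ⟨f x, ⟨hxB, rfl⟩, ih (hmono hτ hfS), hxb, ?_, ?_⟩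
      · intro w' hw'F hw'b
        have hw'x : w' = x := hinj w' hw'F.1 x hxB hw'F.2.symm
        exact (hxb (hw'x ▸ hw'b)).elim
      · by_cases hG : G.Adj (f x) x
        · exact Or.inl ⟨hG, fun y hy hyb => huniq y (hGH hy) fun hyS => hyb (ih (hmono hτ hyS))⟩
        · refine Or.inr fun y hy => ?_
          by_contra hyb
          have hyx := huniq y (hGH hy) fun hyS => hyb (ih (hmono hτ hyS))
          rw [hyx] at hy
          exact hG hy
  have hM0 : ∀ w : V, w ∈ (Finset.univ.filter (fun w => w ∉ B)).toList ↔ w ∉ B := by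
    intro w; rw [Finset.mem_toList, Finset.mem_filter]; simp
  set M : List V := ((Finset.univ.filter (fun w => w ∉ B)).toList).mergeSort
      (fun a b => decide (τ a ≤ τ b)) with hMdef
  have hperm : M.Perm ((Finset.univ.filter (fun w => w ∉ B)).toList) :=
    List.mergeSort_perm _ _
  have hMmem : ∀ w, w ∈ M ↔ w ∉ B := fun w => (hperm.mem_iff).trans (hM0 w)
  have hMnodup : M.Nodup := (hperm.nodup_iff).mpr (Finset.nodup_toList _)
  have hMsorted : M.Pairwise fun a b => τ a ≤ τ b := by
    have hP := List.pairwise_mergeSort (le := fun a b => decide (τ a ≤ τ b))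
      (fun a b c hab hbc => by
        simp only [decide_eq_true_eq] at *; omega)
      (fun a b => by
        simp only [Bool.or_eq_true, decide_eq_true_eq]; exact le_total _ _)
      ((Finset.univ.filter (fun w => w ∉ B)).toList)
    exact hP.imp fun h => by simpa using h
  have ZLIST : ∀ (M' : List V) (blue forced : Set V),
      M'.Nodup → M'.Pairwise (fun a b => τ a ≤ τ b) →
      (∀ w ∈ M', w ∉ B) → (∀ w ∈ M', w ∉ blue) → (∀ w ∈ M', f w ∉ forced) →
      (∀ w ∈ M', ∀ x ∈ S (τ w), x ∈ blue ∨ x ∈ M') →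
      zfValidList G blue forced (M'.map fun w => (f w, w)) := by
    intro M'
    induction M' with
    | nil => intro blue forced _ _ _ _ _ _; trivial
    | cons w M' ihM =>
      intro blue forced hnd hsort hB hblue hforced hcover
      have hwM : w ∈ w :: M' := List.mem_cons_self
      have hwB : w ∉ B := hB w hwM
      obtain ⟨hwS, hfS, hfadj, hfuniq⟩ := hkey w hwB
      have hSsub : S (τ w) ⊆ blue := by
        intro x hx
        rcases hcover w hwM x hx with h | h
        · exact h
        rcases List.mem_cons.mp h with rfl | h'
        · exact (hwS hx).elim
        · have hτ' : τ w ≤ τ x := (List.pairwise_cons.mp hsort).1 x h'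
          exact ((hkey x (hB x (List.mem_cons_of_mem _ h'))).1 (hmono hτ' hx)).elim
      rw [List.map_cons]
      refine ⟨⟨hSsub hfS, hblue w hwM, hforced w hwM, ?_⟩, ?_⟩
      · by_cases hG : G.Adj (f w) w
        · exact Or.inl ⟨hG, fun x hx hxb => hfuniq x (hGH hx) fun hxS => hxb (hSsub hxS)⟩
        · refine Or.inr fun x hx => ?_
          by_contra hxb
          have hxw := hfuniq x (hGH hx) fun hxS => hxb (hSsub hxS)
          rw [hxw] at hx
          exact hG hx
      · apply ihM
        · exact (List.nodup_cons.mp hnd).2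
        · exact (List.pairwise_cons.mp hsort).2
        · exact fun w' h => hB w' (List.mem_cons_of_mem _ h)
        · intro w' h hmem
          rcases Set.mem_insert_iff.mp hmem with heq | hmem'
          · have hww' : w' = w := heq
            exact (List.nodup_cons.mp hnd).1 (hww' ▸ h)
          · exact hblue w' (List.mem_cons_of_mem _ h) hmem'
        · intro w' h hmem
          rcases Set.mem_insert_iff.mp hmem with heq | hmem'
          · have heq' : f w' = f w := heq
            have hww' : w' = w := hinj w' (hB w' (List.mem_cons_of_mem _ h)) w hwB heq'
            exact (List.nodup_cons.mp hnd).1 (hww' ▸ h)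
          · exact hforced w' (List.mem_cons_of_mem _ h) hmem'
        · intro w' h x hx
          rcases hcover w' (List.mem_cons_of_mem _ h) x hx with hbl | hmem
          · exact Or.inl (Set.mem_insert_of_mem _ hbl)
          rcases List.mem_cons.mp hmem with rfl | hmem'
          · exact Or.inl (Set.mem_insert _ _)
          · exact Or.inr hmem'
  set L : List (V × V) := M.map (fun w => (f w, w)) with hLdef
  have hvalid : zfValidList G B ∅ L :=
    ZLIST M B ∅ hMnodup hMsorted (fun w h => (hMmem w).mp h)
      (fun w h => (hMmem w).mp h) (fun w _ => Set.notMem_empty _)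
      (fun w _ x hx => by
        by_cases hxB : x ∈ B
        · exact Or.inl hxB
        · exact Or.inr ((hMmem x).mpr hxB))
  have hLF : F = {p | p ∈ L} := by
    ext p
    obtain ⟨a, b⟩ := p
    simp only [hFdef, Set.mem_setOf_eq, hLdef, List.mem_map]
    constructor
    · rintro ⟨hbB, rfl⟩
      exact ⟨b, (hMmem b).mpr hbB, rfl⟩
    · rintro ⟨w, hw, heq⟩
      rw [Prod.mk.injEq] at heq
      obtain ⟨h1, h2⟩ := heq
      subst h2
      exact ⟨(hMmem w).mp hw, h1.symm⟩
  have hend : endBlue B L = Set.univ := by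
    apply Set.eq_univ_of_forall
    intro x
    simp only [endBlue, Set.mem_union, Set.mem_setOf_eq]
    by_cases hxB : x ∈ B
    · exact Or.inl hxB
    · exact Or.inr ⟨f x, List.mem_map.mpr ⟨x, (hMmem x).mpr hxB, rfl⟩⟩
  have hmax : ∀ u w, ¬ zfForceValid G (endBlue B L) (endForced L) u w := by
    intro u w h
    exact h.2.1 (by rw [hend]; trivial)
  refine ⟨F, ⟨L, hvalid, hmax, hLF⟩, ?_, hcov⟩
  apply Set.eq_univ_of_forall
  intro x
  by_cases hxB : x ∈ B
  · exact Set.mem_union_left _ hxB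
  · exact Set.mem_union_right _ ⟨f x, hxB, rfl⟩

/-- `pt_⌊Z⌋(G) = min{ pt_Z(H) : H spanning supergraph of G, Z(H) = ⌊Z⌋(G) }`. -/
theorem stmt1 {V : Type*} [Fintype V] (G : SimpleGraph V) :
    ptZFgraph G =
      sInf {n : ℕ∞ | ∃ H : SimpleGraph V, G ≤ H ∧ Znum H = ZFnum G ∧ n = ptZgraph H} := by
  classical
  apply le_antisymm
  · -- pt_⌊Z⌋(G) ≤ pt_Z(H) for each qualifying spanning supergraph H
    apply le_sInf
    rintro n ⟨H, hGH, hZ, rfl⟩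
    apply le_sInf
    rintro m ⟨B, hBzfs, hBcard, rfl⟩
    apply le_sInf
    rintro k ⟨t, rfl, ht⟩
    obtain ⟨F, hF, hcover, hsub⟩ := std_to_zf hGH B t ht
    have h1 : ptZFgraph G ≤ ptZF G B :=
      sInf_le ⟨B, ⟨F, hF, hcover⟩, by rw [hBcard, hZ], rfl⟩
    have h2 : ptZF G B ≤ ptZFofF G F B := sInf_le ⟨F, hF, rfl⟩
    have h3 : ptZFofF G F B ≤ (t : ℕ∞) := by
      refine sInf_le ⟨t, rfl, ?_⟩
      have hs := hsub t
      rw [ht] at hs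
      exact Set.univ_subset_iff.mp hs
    exact h1.trans (h2.trans h3)
  · -- min ≤ pt_⌊Z⌋(G;F) for each minimum ⌊Z⌋ forcing set B and force set F
    apply le_sInf
    rintro n ⟨B, hBzf, hBcard, rfl⟩
    apply le_sInf
    rintro m ⟨F, hF, rfl⟩
    apply le_sInf
    rintro k ⟨t, rfl, ht⟩
    set H : SimpleGraph V := G ⊔ SimpleGraph.fromEdgeSet {e | ∃ p ∈ F, e = s(p.1, p.2)}
      with hHdef
    have hGH : G ≤ H := le_sup_left
    have hsub := zf_to_std G B F hF
    have hHt : (zStep H)^[t] B = Set.univ := by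
      have hs := hsub t
      rw [ht] at hs
      exact Set.univ_subset_iff.mp hs
    have hZle : Znum H ≤ ZFnum G := by
      rw [← hBcard]
      exact Nat.sInf_le ⟨B, ⟨t, hHt⟩, rfl⟩
    have hZge : ZFnum G ≤ Znum H := by
      have hne : {k : ℕ | ∃ B : Set V, IsZeroForcingSet H B ∧ B.ncard = k}.Nonempty :=
        ⟨(Set.univ : Set V).ncard, Set.univ, ⟨0, rfl⟩, rfl⟩
      show ZFnum G ≤ sInf {k : ℕ | ∃ B : Set V, IsZeroForcingSet H B ∧ B.ncard = k}
      apply le_csInf hne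
      rintro k' ⟨B', hB', rfl⟩
      obtain ⟨T', hT'⟩ := hB'
      obtain ⟨F', hF', hcov', -⟩ := std_to_zf hGH B' T' hT'
      exact Nat.sInf_le ⟨B', ⟨F', hF', hcov'⟩, rfl⟩
    have hZ : Znum H = ZFnum G := le_antisymm hZle hZge
    have h1 : sInf {n : ℕ∞ | ∃ H' : SimpleGraph V,
        G ≤ H' ∧ Znum H' = ZFnum G ∧ n = ptZgraph H'} ≤ ptZgraph H :=
      sInf_le ⟨H, hGH, hZ, rfl⟩
    have h2 : ptZgraph H ≤ ptZ H B :=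
      sInf_le ⟨B, ⟨t, hHt⟩, by rw [hBcard, hZ], rfl⟩
    have h3 : ptZ H B ≤ (t : ℕ∞) := sInf_le ⟨t, rfl, hHt⟩
    exact h1.trans (h2.trans h3)

end ZFT
end

section
/- The ⌊Z⌋ throttling number is subgraph monotone: if G and H are finite simple graphs with G a subgraph of H (i.e., G embeds into H), then th_⌊Z⌋(G) ≤ th_⌊Z⌋(H). -/
open SimpleGraph

namespace ZFT

variable {V : Type*} {α : Type*} {β : Type*}

section Aux
variable {X : SimpleGraph α}

def fBlue (b : Set α) (L : List (α × α)) : Set α := L.foldl (fun s p => insert p.2 s) b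
def fForced (fo : Set α) (L : List (α × α)) : Set α := L.foldl (fun s p => insert p.1 s) fo

@[simp] lemma fBlue_nil (b : Set α) : fBlue b ([] : List (α × α)) = b := rfl
@[simp] lemma fBlue_cons (b : Set α) (p : α × α) (L : List (α × α)) :
    fBlue b (p :: L) = fBlue (insert p.2 b) L := rfl
@[simp] lemma fForced_nil (fo : Set α) : fForced fo ([] : List (α × α)) = fo := rfl
@[simp] lemma fForced_cons (fo : Set α) (p : α × α) (L : List (α × α)) :
    fForced fo (p :: L) = fForced (insert p.1 fo) L := rfl

lemma fBlue_eq : ∀ (L : List (α × α)) (b : Set α), fBlue b L = b ∪ {w | ∃ u, (u, w) ∈ L}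
  | [], b => by simp
  | p :: L, b => by
      rw [fBlue_cons, fBlue_eq L]
      ext x
      simp only [Set.mem_union, Set.mem_insert_iff, Set.mem_setOf_eq, List.mem_cons]
      constructor
      · rintro ((rfl | hx) | ⟨u, hu⟩)
        · exact Or.inr ⟨p.1, Or.inl rfl⟩
        · exact Or.inl hx
        · exact Or.inr ⟨u, Or.inr hu⟩
      · rintro (hx | ⟨u, (h | h)⟩)
        · exact Or.inl (Or.inr hx)
        · exact Or.inl (Or.inl (congrArg Prod.snd h))
        · exact Or.inr ⟨u, h⟩

lemma fForced_eq : ∀ (L : List (α × α)) (fo : Set α),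
    fForced fo L = fo ∪ {u | ∃ w, (u, w) ∈ L}
  | [], fo => by simp
  | p :: L, fo => by
      rw [fForced_cons, fForced_eq L]
      ext x
      simp only [Set.mem_union, Set.mem_insert_iff, Set.mem_setOf_eq, List.mem_cons]
      constructor
      · rintro ((rfl | hx) | ⟨w, hw⟩)
        · exact Or.inr ⟨p.2, Or.inl rfl⟩
        · exact Or.inl hx
        · exact Or.inr ⟨w, Or.inr hw⟩
      · rintro (hx | ⟨w, (h | h)⟩)
        · exact Or.inl (Or.inr hx)
        · exact Or.inl (Or.inl (congrArg Prod.fst h))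
        · exact Or.inr ⟨w, h⟩

lemma subset_fBlue (b : Set α) (L : List (α × α)) : b ⊆ fBlue b L := by
  rw [fBlue_eq]; exact Set.subset_union_left

lemma zfValidList_append : ∀ (L₁ L₂ : List (α × α)) (b fo : Set α),
    zfValidList X b fo (L₁ ++ L₂) ↔
      zfValidList X b fo L₁ ∧ zfValidList X (fBlue b L₁) (fForced fo L₁) L₂
  | [], L₂, b, fo => by simp [zfValidList]
  | p :: L₁, L₂, b, fo => by
      show (zfForceValid X b fo p.1 p.2 ∧ zfValidList X _ _ (L₁ ++ L₂)) ↔ _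
      rw [zfValidList_append L₁ L₂ (insert p.2 b) (insert p.1 fo)]
      simp only [zfValidList, fBlue_cons, fForced_cons, and_assoc]

lemma zf_targets_not_blue : ∀ (L : List (α × α)) (b fo : Set α),
    zfValidList X b fo L → ∀ p ∈ L, p.2 ∉ b
  | [], _, _ => by simp
  | p :: L, b, fo => by
      rintro ⟨hp, hL⟩ q hq
      rcases List.mem_cons.1 hq with rfl | hq
      · exact hp.2.1
      · exact fun hb => zf_targets_not_blue L _ _ hL q hq (Set.mem_insert_of_mem _ hb)

lemma zf_targets_nodup : ∀ (L : List (α × α)) (b fo : Set α),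
    zfValidList X b fo L → (L.map Prod.snd).Nodup
  | [], _, _ => by simp
  | p :: L, b, fo => by
      rintro ⟨hp, hL⟩
      simp only [List.map_cons, List.nodup_cons]
      refine ⟨fun hmem => ?_, zf_targets_nodup L _ _ hL⟩
      obtain ⟨q, hq, hq2⟩ := List.mem_map.1 hmem
      exact zf_targets_not_blue L _ _ hL q hq (by rw [hq2]; exact Set.mem_insert _ _)

lemma zf_forcers_not_forced : ∀ (L : List (α × α)) (b fo : Set α),
    zfValidList X b fo L → ∀ p ∈ L, p.1 ∉ fo
  | [], _, _ => by simp
  | p :: L, b, fo => by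
      rintro ⟨hp, hL⟩ q hq
      rcases List.mem_cons.1 hq with rfl | hq
      · exact hp.2.2.1
      · exact fun hb => zf_forcers_not_forced L _ _ hL q hq (Set.mem_insert_of_mem _ hb)

lemma zf_forcers_nodup : ∀ (L : List (α × α)) (b fo : Set α),
    zfValidList X b fo L → (L.map Prod.fst).Nodup
  | [], _, _ => by simp
  | p :: L, b, fo => by
      rintro ⟨hp, hL⟩
      simp only [List.map_cons, List.nodup_cons]
      refine ⟨fun hmem => ?_, zf_forcers_nodup L _ _ hL⟩
      obtain ⟨q, hq, hq2⟩ := List.mem_map.1 hmem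
      exact zf_forcers_not_forced L _ _ hL q hq (by rw [hq2]; exact Set.mem_insert _ _)

lemma nodup_snd_unique_fst {L : List (α × α)} (h : (L.map Prod.snd).Nodup)
    {x x' w : α} (h1 : (x, w) ∈ L) (h2 : (x', w) ∈ L) : x = x' := by
  induction L with
  | nil => simp at h1
  | cons p L ih =>
      simp only [List.map_cons, List.nodup_cons] at h
      rcases List.mem_cons.1 h1 with h1' | h1' <;> rcases List.mem_cons.1 h2 with h2' | h2'
      · rw [← h2'] at h1'; exact (congrArg Prod.fst h1')
      · exact absurd (List.mem_map.2 ⟨(x', w), h2', by rw [← h1']⟩) h.1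
      · exact absurd (List.mem_map.2 ⟨(x, w), h1', by rw [← h2']⟩) h.1
      · exact ih h.2 h1' h2'

lemma nodup_fst_unique_snd {L : List (α × α)} (h : (L.map Prod.fst).Nodup)
    {x w w' : α} (h1 : (x, w) ∈ L) (h2 : (x, w') ∈ L) : w = w' := by
  induction L with
  | nil => simp at h1
  | cons p L ih =>
      simp only [List.map_cons, List.nodup_cons] at h
      rcases List.mem_cons.1 h1 with h1' | h1' <;> rcases List.mem_cons.1 h2 with h2' | h2'
      · rw [← h2'] at h1'; exact (congrArg Prod.snd h1')
      · exact absurd (List.mem_map.2 ⟨(x, w'), h2', by rw [← h1']⟩) h.1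
      · exact absurd (List.mem_map.2 ⟨(x, w), h1', by rw [← h2']⟩) h.1
      · exact ih h.2 h1' h2'

/-- Any valid list extends to a maximal one. -/
lemma exists_maximal_ext [Fintype α] (X : SimpleGraph α) :
    ∀ (n : ℕ) (blue forced : Set α), (Set.univ \ blue).ncard = n →
      ∃ L : List (α × α), zfValidList X blue forced L ∧
        ∀ u w, ¬ zfForceValid X (fBlue blue L) (fForced forced L) u w := by
  intro n
  induction n using Nat.strong_induction_on with
  | _ n ih =>
    intro blue forced hn
    by_cases h : ∃ u w, zfForceValid X blue forced u w
    · obtain ⟨u, w, huw⟩ := h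
      have hwb : w ∉ blue := huw.2.1
      have hlt : (Set.univ \ insert w blue).ncard < n := by
        rw [← hn]
        apply Set.ncard_lt_ncard _ (Set.toFinite _)
        constructor
        · intro x hx
          exact ⟨trivial, fun hb => hx.2 (Set.mem_insert_of_mem _ hb)⟩
        · intro hsub
          exact (hsub ⟨trivial, hwb⟩).2 (Set.mem_insert _ _)
      obtain ⟨L, hL, hmax⟩ := ih _ hlt (insert w blue) (insert u forced) rfl
      exact ⟨(u, w) :: L, ⟨huw, hL⟩, hmax⟩
    · exact ⟨[], trivial, fun u w huw => h ⟨u, w, huw⟩⟩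

end Aux
section Trans
open scoped Classical

variable {W : Type*}

noncomputable def upd (C K : Set W) (A : W → Option W) (p : W × W) : W → Option W :=
  Function.update A p.2 (if p.1 ∈ C then some p.1 else if p.1 ∈ K then none else A p.1)

noncomputable def foldU (C K : Set W) (A : W → Option W) (L : List (W × W)) : W → Option W :=
  L.foldl (upd C K) A

@[simp] lemma foldU_nil (C K : Set W) (A : W → Option W) : foldU C K A [] = A := rfl
@[simp] lemma foldU_cons (C K : Set W) (A : W → Option W) (p : W × W) (L : List (W × W)) :
    foldU C K A (p :: L) = foldU C K (upd C K A p) L := rfl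

lemma upd_apply (C K : Set W) (A : W → Option W) (u w x : W) :
    upd C K A (u, w) x =
      if x = w then (if u ∈ C then some u else if u ∈ K then none else A u) else A x := by
  simp [upd, Function.update_apply]

lemma foldU_notTarget (C K : Set W) :
    ∀ (L : List (W × W)) (A : W → Option W) (x : W),
      (∀ p ∈ L, p.2 ≠ x) → foldU C K A L x = A x
  | [], A, x => by simp
  | p :: L, A, x => by
      intro h
      rw [foldU_cons, foldU_notTarget C K L _ x (fun q hq => h q (List.mem_cons_of_mem _ hq))]
      rcases p with ⟨u, w⟩
      rw [upd_apply]
      have : x ≠ w := fun hx => h (u, w) (List.mem_cons_self) hx.symm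
      simp [this]

def Holds (C K forced T : Set W) (A : W → Option W) (p x : W) : Prop :=
  x ∈ T ∧ A x = some p ∧ (x ∈ C ∪ K ∨ x ∉ forced)

structure TokInv (C K B₀ blue forced T : Set W) (A : W → Option W) : Prop where
  tSub : T ⊆ blue
  blueSub : blue ⊆ B₀ ∪ T
  bSub : B₀ ⊆ blue
  forcedSub : forced ⊆ blue
  dom : ∀ x, A x ≠ none → x ∈ T
  vals : ∀ x p, A x = some p → p ∈ C
  uniq : ∀ p x y, Holds C K forced T A p x → Holds C K forced T A p y → x = y
  fresh : ∀ p, p ∉ forced → ∀ x, ¬ Holds C K forced T A p x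

lemma tok_step {C K B₀ blue forced T : Set W} {A : W → Option W} {u w : W}
    (hI : TokInv C K B₀ blue forced T A) (hu : u ∈ blue) (hw : w ∉ blue) (hufo : u ∉ forced) :
    TokInv C K B₀ (insert w blue) (insert u forced) (insert w T) (upd C K A (u, w)) := by
  have hwT : w ∉ T := fun h => hw (hI.tSub h)
  set A' := upd C K A (u, w) with hA'
  have hne : ∀ x, x ≠ w → A' x = A x := by
    intro x hx; rw [hA', upd_apply]; simp [hx]
  have hweq : A' w = (if u ∈ C then some u else if u ∈ K then none else A u) := by
    rw [hA', upd_apply]; simp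
  have hold' : ∀ p x, Holds C K (insert u forced) (insert w T) A' p x → x ≠ w →
      Holds C K forced T A p x := by
    rintro p x ⟨hxT, hxA, hxor⟩ hxw
    refine ⟨(Set.mem_insert_iff.1 hxT).resolve_left hxw, (hne x hxw) ▸ hxA, ?_⟩
    rcases hxor with h | h
    · exact Or.inl h
    · exact Or.inr fun hc => h (Set.mem_insert_of_mem _ hc)
  have hmix : ∀ p z, Holds C K (insert u forced) (insert w T) A' p z → z ≠ w →
      A' w = some p → False := by
    intro p z hz hzw hAw
    have hz' := hold' p z hz hzw
    rw [hweq] at hAw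
    by_cases huC : u ∈ C
    · simp only [if_pos huC, Option.some.injEq] at hAw
      exact hI.fresh p (hAw ▸ hufo) z hz'
    · by_cases huK : u ∈ K
      · simp [huC, huK] at hAw
      · simp only [if_neg huC, if_neg huK] at hAw
        have huT : u ∈ T := hI.dom u (by rw [hAw]; simp)
        have hu_holds : Holds C K forced T A p u := ⟨huT, hAw, Or.inr hufo⟩
        have hzu : z = u := hI.uniq p z u hz' hu_holds
        subst hzu
        rcases hz.2.2 with h | h
        · rcases h with h | h
          · exact huC h
          · exact huK h
        · exact h (Set.mem_insert _ _)
  constructor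
  · exact Set.insert_subset_insert hI.tSub
  · intro x hx
    rcases Set.mem_insert_iff.1 hx with rfl | hx
    · exact Or.inr (Set.mem_insert _ _)
    · rcases hI.blueSub hx with h | h
      · exact Or.inl h
      · exact Or.inr (Set.mem_insert_of_mem _ h)
  · exact hI.bSub.trans (Set.subset_insert _ _)
  · intro x hx
    rcases Set.mem_insert_iff.1 hx with rfl | hx
    · exact Set.mem_insert_of_mem _ hu
    · exact Set.mem_insert_of_mem _ (hI.forcedSub hx)
  · intro x hx
    by_cases hxw : x = w
    · exact hxw ▸ Set.mem_insert _ _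
    · exact Set.mem_insert_of_mem _ (hI.dom x (by rw [← hne x hxw]; exact hx))
  · intro x p hxp
    by_cases hxw : x = w
    · subst hxw
      rw [hweq] at hxp
      by_cases huC : u ∈ C
      · simp only [if_pos huC, Option.some.injEq] at hxp; exact hxp ▸ huC
      · by_cases huK : u ∈ K
        · simp [huC, huK] at hxp
        · simp only [if_neg huC, if_neg huK] at hxp; exact hI.vals u p hxp
    · exact hI.vals x p (by rw [← hne x hxw]; exact hxp)
  · intro p x y hx hy
    by_cases hxw : x = w <;> by_cases hyw : y = w
    · rw [hxw, hyw]
    · exact absurd (hmix p y hy hyw (hxw ▸ hx.2.1)) not_false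
    · exact absurd (hmix p x hx hxw (hyw ▸ hy.2.1)) not_false
    · exact hI.uniq p x y (hold' p x hx hxw) (hold' p y hy hyw)
  · intro p hp x hx
    have hp' : p ∉ forced := fun hc => hp (Set.mem_insert_of_mem _ hc)
    by_cases hxw : x = w
    · subst hxw
      have hAw : A' x = some p := hx.2.1
      rw [hweq] at hAw
      by_cases huC : u ∈ C
      · simp only [if_pos huC, Option.some.injEq] at hAw
        exact hp (hAw ▸ Set.mem_insert _ _)
      · by_cases huK : u ∈ K
        · simp [huC, huK] at hAw
        · simp only [if_neg huC, if_neg huK] at hAw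
          have huT : u ∈ T := hI.dom u (by rw [hAw]; simp)
          exact hI.fresh p hp' u ⟨huT, hAw, Or.inr hufo⟩
    · exact hI.fresh p hp' x (hold' p x hx hxw)
end Trans

section Trans2
open scoped Classical

variable {W : Type*}

def ChainInvP (H : SimpleGraph W) (R blue T : Set W) (A : W → Option W) : Prop :=
  ∀ x ∈ T, x ∉ R → ∀ p, A x = some p →
    p ∈ blue ∧ p ∈ R ∧ ∀ y, H.Adj p y → y ∈ R → y ∈ blue

def AnsInvP (Bset R blue T : Set W) (A S : W → Option W) : Prop :=
  ∀ x ∈ T, x ∉ Bset → A x = none → ∃ b, S x = some b ∧ b ∈ Bset \ R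

lemma chain_step {H : SimpleGraph W} {R Bk blue forced T : Set W} {A : W → Option W} {u w : W}
    (hC : ChainInvP H R blue T A) (hblueSub : blue ⊆ Bk ∪ T)
    (hforce : zfForceValid H blue forced u w) :
    ChainInvP H R (insert w blue) (insert w T) (upd R Bk A (u, w)) := by
  intro x hxT hxR p hxp
  by_cases hxw : x = w
  · subst hxw
    rw [upd_apply, if_pos rfl] at hxp
    by_cases huR : u ∈ R
    · rw [if_pos huR, Option.some_inj] at hxp
      subst hxp
      refine ⟨Set.mem_insert_of_mem _ hforce.1, huR, fun y hady hyR => ?_⟩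
      rcases hforce.2.2.2 with ⟨hadj, huniq⟩ | hall
      · by_cases hyb : y ∈ blue
        · exact Set.mem_insert_of_mem _ hyb
        · exact absurd hyR ((huniq y hady hyb) ▸ hxR)
      · exact Set.mem_insert_of_mem _ (hall y hady)
    · by_cases huB : u ∈ Bk
      · simp [huR, huB] at hxp
      · rw [if_neg huR, if_neg huB] at hxp
        have huT : u ∈ T := (hblueSub hforce.1).resolve_left huB
        obtain ⟨h1, h2, h3⟩ := hC u huT huR p hxp
        exact ⟨Set.mem_insert_of_mem _ h1, h2,
          fun y hy hyR => Set.mem_insert_of_mem _ (h3 y hy hyR)⟩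
  · rw [upd_apply, if_neg hxw] at hxp
    obtain ⟨h1, h2, h3⟩ := hC x ((Set.mem_insert_iff.1 hxT).resolve_left hxw) hxR p hxp
    exact ⟨Set.mem_insert_of_mem _ h1, h2,
      fun y hy hyR => Set.mem_insert_of_mem _ (h3 y hy hyR)⟩

lemma ans_step {Bset R blue T : Set W} {A S : W → Option W} {u w : W}
    (hA : AnsInvP Bset R blue T A S) (hblueSub : blue ⊆ Bset ∪ T) (hu : u ∈ blue) :
    AnsInvP Bset R (insert w blue) (insert w T) (upd R Bset A (u, w))
      (upd (Bset \ R) R S (u, w)) := by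
  intro x hxT hxB hxA
  by_cases hxw : x = w
  · subst hxw
    rw [upd_apply, if_pos rfl] at hxA
    by_cases huR : u ∈ R
    · simp [huR] at hxA
    · by_cases huB : u ∈ Bset
      · refine ⟨u, ?_, ⟨huB, huR⟩⟩
        rw [upd_apply, if_pos rfl, if_pos (Set.mem_diff_of_mem huB huR)]
      · rw [if_neg huR, if_neg huB] at hxA
        have huT : u ∈ T := (hblueSub hu).resolve_left huB
        obtain ⟨b, hb, hbB⟩ := hA u huT huB hxA
        refine ⟨b, ?_, hbB⟩
        rw [upd_apply, if_pos rfl, if_neg (fun hc => huB hc.1), if_neg huR]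
        exact hb
  · rw [upd_apply, if_neg hxw] at hxA
    obtain ⟨b, hb, hbB⟩ := hA x ((Set.mem_insert_iff.1 hxT).resolve_left hxw) hxB hxA
    refine ⟨b, ?_, hbB⟩
    rw [upd_apply, if_neg hxw]
    exact hb

lemma ginv_fold {H : SimpleGraph W} {Bset R : Set W} :
    ∀ (L : List (W × W)) (blue forced T : Set W) (A S : W → Option W),
      zfValidList H blue forced L →
      TokInv R Bset Bset blue forced T A →
      TokInv (Bset \ R) R Bset blue forced T S →
      ChainInvP H R blue T A →
      AnsInvP Bset R blue T A S →
      TokInv R Bset Bset (fBlue blue L) (fForced forced L) (fBlue T L) (foldU R Bset A L) ∧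
      TokInv (Bset \ R) R Bset (fBlue blue L) (fForced forced L) (fBlue T L)
        (foldU (Bset \ R) R S L) ∧
      ChainInvP H R (fBlue blue L) (fBlue T L) (foldU R Bset A L) ∧
      AnsInvP Bset R (fBlue blue L) (fBlue T L) (foldU R Bset A L) (foldU (Bset \ R) R S L)
  | [], blue, forced, T, A, S => by
      intro _ h1 h2 h3 h4
      exact ⟨h1, h2, h3, h4⟩
  | p :: L, blue, forced, T, A, S => by
      rintro ⟨hp, hL⟩ h1 h2 h3 h4
      rcases p with ⟨u, w⟩
      exact ginv_fold L _ _ _ _ _ hL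
        (tok_step h1 hp.1 hp.2.1 hp.2.2.1)
        (tok_step h2 hp.1 hp.2.1 hp.2.2.1)
        (chain_step h3 h1.blueSub hp)
        (ans_step h4 h1.blueSub hp.1)
end Trans2

section Trans3
open scoped Classical

variable {V W : Type*} {G : SimpleGraph V} {H : SimpleGraph W}

lemma foldU_append (C K : Set W) (A : W → Option W) (L₁ L₂ : List (W × W)) :
    foldU C K A (L₁ ++ L₂) = foldU C K (foldU C K A L₁) L₂ := by
  simp [foldU, List.foldl_append]

/-- The value of the anchor fold at a target equals its step value. -/
lemma foldU_value_at {Bset C : Set W} {A₀ : W → Option W} {L : List (W × W)}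
    (hL : zfValidList H Bset ∅ L) {u w : W} (hmem : (u, w) ∈ L) :
    foldU C Bset A₀ L w =
      (if u ∈ C then some u else if u ∈ Bset then none
        else foldU C Bset A₀ L u) := by
  obtain ⟨L₁, L₂, rfl⟩ := List.append_of_mem hmem
  have hnd := zf_targets_nodup _ _ _ hL
  rw [List.map_append, List.map_cons] at hnd
  have hndR : ((u, w).2 :: L₂.map Prod.snd).Nodup := hnd.of_append_right
  have hwL2 : w ∉ L₂.map Prod.snd := (List.nodup_cons.1 hndR).1
  have hdisj : ∀ x ∈ L₁.map Prod.snd, x ∉ ((u, w).2 :: L₂.map Prod.snd) :=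
    fun x hx => (List.disjoint_of_nodup_append hnd) hx
  have happ := (zfValidList_append L₁ ((u, w) :: L₂) Bset ∅).1 hL
  have hL1 := happ.1
  obtain ⟨hforce, hLtail⟩ := happ.2
  set A₁ := foldU C Bset A₀ L₁ with hA₁
  have hfw : foldU C Bset A₀ (L₁ ++ (u, w) :: L₂) w = upd C Bset A₁ (u, w) w := by
    rw [foldU_append, foldU_cons]
    exact foldU_notTarget C Bset L₂ _ w
      (fun p hp hpw => hwL2 (List.mem_map.2 ⟨p, hp, hpw⟩))
  rw [hfw, upd_apply, if_pos rfl]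
  by_cases huC : u ∈ C
  · simp [huC]
  · by_cases huB : u ∈ Bset
    · simp [huC, huB]
    · simp only [if_neg huC, if_neg huB]
      -- u is a target of L₁, hence the fold value at u is stable
      have hub : u ∈ fBlue Bset L₁ := hforce.1
      rw [fBlue_eq] at hub
      have huT1 : u ∈ {w | ∃ x, (x, w) ∈ L₁} := by
        rcases hub with h | h
        · exact absurd h huB
        · exact h
      have huL1 : u ∈ L₁.map Prod.snd := by
        obtain ⟨x, hx⟩ := huT1
        exact List.mem_map.2 ⟨(x, u), hx, rfl⟩
      have hunw : u ∉ ((u, w).2 :: L₂.map Prod.snd) := hdisj u huL1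
      rw [foldU_append, foldU_cons]
      rw [foldU_notTarget C Bset L₂ _ u
        (fun p hp hpw => hunw (List.mem_cons_of_mem _ (List.mem_map.2 ⟨p, hp, hpw⟩)))]
      rw [upd_apply]
      have hne : u ≠ (u, w).2 := fun hc => hunw (by rw [hc]; exact List.mem_cons_self)
      rw [if_neg hne]

/-- targets of the full list are not initially blue -/
noncomputable def glAux (fR Bset : Set W) (g : W → V) :
    (W → Option W) → List (W × W) → List (V × V)
  | _, [] => []
  | A, p :: L =>
      (Option.map (fun q => (g q, g p.2))
        (if p.2 ∈ fR then
          (if p.1 ∈ fR then some p.1 else if p.1 ∈ Bset then none else A p.1)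
         else none)).toList ++ glAux fR Bset g (upd fR Bset A p) L

lemma glAux_mem {fR Bset : Set W} {g : W → V} :
    ∀ (L : List (W × W)) (A : W → Option W), (L.map Prod.snd).Nodup →
      ∀ {u w q : W}, (u, w) ∈ L → w ∈ fR → foldU fR Bset A L w = some q →
        (g q, g w) ∈ glAux fR Bset g A L
  | [], A => by simp
  | p :: L, A => by
      intro hnd u w q hmem hwR hval
      simp only [List.map_cons, List.nodup_cons] at hnd
      rcases List.mem_cons.1 hmem with heq | hmem'
      · have hw2 : p.2 = w := by rw [← heq]
        have hwL : w ∉ L.map Prod.snd := hw2 ▸ hnd.1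
        have hstable : foldU fR Bset A (p :: L) w = upd fR Bset A p w := by
          rw [foldU_cons]
          exact foldU_notTarget fR Bset L _ w
            (fun r hr hrw => hwL (List.mem_map.2 ⟨r, hr, hrw⟩))
        rw [hstable] at hval
        rcases p with ⟨u', w'⟩
        have hw2' : w' = w := hw2
        subst hw2'
        rw [upd_apply, if_pos rfl] at hval
        show _ ∈ _ ++ _
        apply List.mem_append_left
        simp only [if_pos hwR, hval, Option.map_some, Option.toList_some]
        exact List.mem_singleton.2 rfl
      · rw [glAux]
        apply List.mem_append_right
        exact glAux_mem L (upd fR Bset A p) hnd.2 hmem' hwR hval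

def fGset (f : G →g H) (T : Set W) (A : W → Option W) : Set V :=
  {v | ∃ x, x ∈ T ∧ x ∈ Set.range f ∧ A x = some (f v)}

section WithMaps
variable (f : G →g H) (g : W → V) (hgf : ∀ v, g (f v) = v)
  (hfg : ∀ w, w ∈ Set.range f → f (g w) = w)

lemma preim_insert_mem (hgf : ∀ v, g (f v) = v) (hfg : ∀ w, w ∈ Set.range f → f (g w) = w)
    {w : W} (hwR : w ∈ Set.range f) (T : Set W) :
    f ⁻¹' (insert w T) = insert (g w) (f ⁻¹' T) := by
  ext v
  simp only [Set.mem_preimage, Set.mem_insert_iff]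
  constructor
  · rintro (h | h)
    · exact Or.inl (by rw [← h, hgf])
    · exact Or.inr h
  · rintro (rfl | h)
    · exact Or.inl (hfg w hwR)
    · exact Or.inr h

lemma preim_insert_not_mem {w : W} (hwR : w ∉ Set.range f) (T : Set W) :
    f ⁻¹' (insert w T) = f ⁻¹' T := by
  ext v
  simp only [Set.mem_preimage, Set.mem_insert_iff]
  exact ⟨fun h => h.resolve_left (fun hc => hwR ⟨v, hc⟩), Or.inr⟩

lemma fGset_step_none {T : Set W} {A : W → Option W} {u w : W} (hwT : w ∉ T)
    (h : upd (Set.range f) Bset A (u, w) w = none ∨ w ∉ Set.range f) :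
    fGset f (insert w T) (upd (Set.range f) Bset A (u, w)) = fGset f T A := by
  ext v
  simp only [fGset, Set.mem_setOf_eq]
  constructor
  · rintro ⟨x, hxT, hxR, hxA⟩
    rcases Set.mem_insert_iff.1 hxT with rfl | hxT'
    · rcases h with h | h
      · rw [h] at hxA; exact absurd hxA (by simp)
      · exact absurd hxR h
    · have hxw : x ≠ w := fun hc => hwT (hc ▸ hxT')
      rw [upd_apply, if_neg hxw] at hxA
      exact ⟨x, hxT', hxR, hxA⟩
  · rintro ⟨x, hxT, hxR, hxA⟩
    have hxw : x ≠ w := fun hc => hwT (hc ▸ hxT)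
    exact ⟨x, Set.mem_insert_of_mem _ hxT, hxR, by rw [upd_apply, if_neg hxw]; exact hxA⟩

lemma fGset_step_some (hgf : ∀ v, g (f v) = v) (hfg : ∀ w, w ∈ Set.range f → f (g w) = w)
    {Bset T : Set W} {A : W → Option W} {u w p : W} (hwT : w ∉ T) (hwR : w ∈ Set.range f)
    (h : upd (Set.range f) Bset A (u, w) w = some p) (hpR : p ∈ Set.range f) :
    fGset f (insert w T) (upd (Set.range f) Bset A (u, w)) = insert (g p) (fGset f T A) := by
  ext v
  simp only [fGset, Set.mem_setOf_eq, Set.mem_insert_iff]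
  constructor
  · rintro ⟨x, hxT, hxR, hxA⟩
    rcases Set.mem_insert_iff.1 hxT with rfl | hxT'
    · rw [h, Option.some_inj] at hxA
      exact Or.inl (by rw [hxA, hgf])
    · have hxw : x ≠ w := fun hc => hwT (hc ▸ hxT')
      rw [upd_apply, if_neg hxw] at hxA
      exact Or.inr ⟨x, hxT', hxR, hxA⟩
  · rintro (rfl | ⟨x, hxT, hxR, hxA⟩)
    · exact ⟨w, Set.mem_insert _ _, hwR, by rw [h, hfg p hpR]⟩
    · have hxw : x ≠ w := fun hc => hwT (hc ▸ hxT)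
      exact ⟨x, Set.mem_insert_of_mem _ hxT, hxR,
        by rw [upd_apply, if_neg hxw]; exact hxA⟩

lemma cond_map (hgf : ∀ v, g (f v) = v) {blueH : Set W} {blueG : Set V}
    (hsub : ∀ x : V, f x ∈ blueH → x ∈ blueG) (a v : V)
    (hcond : (H.Adj (f a) (f v) ∧ ∀ y, H.Adj (f a) y → y ∉ blueH → y = f v) ∨
      (∀ y, H.Adj (f a) y → y ∈ blueH)) :
    (G.Adj a v ∧ ∀ x, G.Adj a x → x ∉ blueG → x = v) ∨ (∀ x, G.Adj a x → x ∈ blueG) := by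
  rcases hcond with ⟨hadj, huniq⟩ | hall
  · by_cases hGadj : G.Adj a v
    · refine Or.inl ⟨hGadj, fun x hx hxb => ?_⟩
      have : f x = f v := huniq (f x) (f.map_adj hx) (fun hb => hxb (hsub x hb))
      rw [← hgf x, this, hgf v]
    · refine Or.inr fun x hx => by_contra fun hxb => ?_
      have : f x = f v := huniq (f x) (f.map_adj hx) (fun hb => hxb (hsub x hb))
      have hxv : x = v := by rw [← hgf x, this, hgf v]
      exact hGadj (hxv ▸ hx)
  · exact Or.inr fun x hx => hsub x (hall (f x) (f.map_adj hx))

end WithMaps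
end Trans3

section Trans4
open scoped Classical

variable {V W : Type*} {G : SimpleGraph V} {H : SimpleGraph W}

lemma vd (f : G →g H) (g : W → V) (hgf : ∀ v, g (f v) = v)
    (hfg : ∀ w, w ∈ Set.range f → f (g w) = w)
    (Bset Tfull : Set W) (Afull : W → Option W) (B' : Set V)
    (hB' : B' = (f ⁻¹' Bset) ∪ {v | f v ∈ Tfull ∧ Afull (f v) = none}) :
    ∀ (L₂ : List (W × W)) (blue forced T : Set W) (A : W → Option W),
      zfValidList H blue forced L₂ →
      TokInv (Set.range f) Bset Bset blue forced T A →
      ChainInvP H (Set.range f) blue T A →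
      foldU (Set.range f) Bset A L₂ = Afull →
      (∀ p ∈ L₂, p.2 ∈ Tfull) →
      zfValidList G (B' ∪ f ⁻¹' T) (fGset f T A) (glAux (Set.range f) Bset g A L₂) := by
  intro L₂
  induction L₂ with
  | nil => intro blue forced T A _ _ _ _ _; trivial
  | cons q L₂' ih =>
      rcases q with ⟨u, w⟩
      intro blue forced T A hvalid htok hchain hAfull hTfull
      obtain ⟨hforce, hLtail⟩ := hvalid
      obtain ⟨hu, hw, hufo, hcond⟩ := hforce
      have hwT : w ∉ T := fun h => hw (htok.tSub h)
      have hAfull' : foldU (Set.range f) Bset (upd (Set.range f) Bset A (u, w)) L₂' = Afull :=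
        hAfull
      have hwTf : w ∈ Tfull := hTfull (u, w) (List.mem_cons_self)
      have hTf' : ∀ p ∈ L₂', p.2 ∈ Tfull := fun p hp => hTfull p (List.mem_cons_of_mem _ hp)
      have hwTargets : ∀ p ∈ L₂', p.2 ≠ w := fun p hp hc =>
        zf_targets_not_blue L₂' _ _ hLtail p hp (by rw [hc]; exact Set.mem_insert _ _)
      have hval : Afull w =
          (if u ∈ Set.range f then some u else if u ∈ Bset then none else A u) := by
        rw [← hAfull', foldU_notTarget _ _ L₂' _ w hwTargets, upd_apply, if_pos rfl]
      have hsub : ∀ x : V, f x ∈ blue → x ∈ B' ∪ f ⁻¹' T := by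
        intro x hx
        rcases htok.blueSub hx with h | h
        · exact Or.inl (by rw [hB']; exact Or.inl h)
        · exact Or.inr h
      have htok' := tok_step htok hu hw hufo
      have hchain' := chain_step hchain htok.blueSub ⟨hu, hw, hufo, hcond⟩
      have hIH := ih (insert w blue) (insert u forced) (insert w T)
        (upd (Set.range f) Bset A (u, w)) hLtail htok' hchain' hAfull' hTf'
      simp only [glAux]
      by_cases hwR : w ∈ Set.range f
      · by_cases huR : u ∈ Set.range f
        · simp only [if_pos hwR, if_pos huR, Option.map_some, Option.toList_some,
            List.singleton_append]
          refine ⟨⟨?_, ?_, ?_, ?_⟩, ?_⟩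
          · exact hsub (g u) (by rw [hfg u huR]; exact hu)
          · intro hc
            rcases hc with hc | hc
            · rw [hB'] at hc
              rcases hc with hc | hc
              · exact hw (htok.bSub (by rw [← hfg w hwR]; exact hc))
              · have : Afull w = none := by rw [← hfg w hwR]; exact hc.2
                rw [hval, if_pos huR] at this
                exact Option.some_ne_none u this
            · exact hwT (by rw [← hfg w hwR]; exact hc)
          · rintro ⟨x, hxT, hxR, hxA⟩
            rw [hfg u huR] at hxA
            exact htok.fresh u hufo x ⟨hxT, hxA, Or.inl (Or.inl hxR)⟩
          · have hcond' := hcond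
            rw [← hfg u huR, ← hfg w hwR] at hcond'
            exact cond_map f g hgf hsub (g u) (g w) hcond'
          · have e1 : B' ∪ f ⁻¹' (insert w T) = insert (g w) (B' ∪ f ⁻¹' T) := by
              rw [preim_insert_mem f g hgf hfg hwR, Set.union_insert]
            have e2 : fGset f (insert w T) (upd (Set.range f) Bset A (u, w)) =
                insert (g u) (fGset f T A) := by
              refine fGset_step_some f g hgf hfg hwT hwR ?_ huR
              rw [upd_apply, if_pos rfl, if_pos huR]
            rw [e1, e2] at hIH
            exact hIH
        · have hnoemit : ∀ (hAw : Afull w = none),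
              zfValidList G (B' ∪ f ⁻¹' T) (fGset f T A)
                (glAux (Set.range f) Bset g (upd (Set.range f) Bset A (u, w)) L₂') := by
            intro hAw
            have hgwB : g w ∈ B' := by
              rw [hB']
              right
              exact ⟨by rw [hfg w hwR]; exact hwTf, by rw [hfg w hwR]; exact hAw⟩
            have e1 : B' ∪ f ⁻¹' (insert w T) = B' ∪ f ⁻¹' T := by
              rw [preim_insert_mem f g hgf hfg hwR, Set.union_insert]
              exact Set.insert_eq_self.2 (Or.inl hgwB)
            have e2 : fGset f (insert w T) (upd (Set.range f) Bset A (u, w)) =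
                fGset f T A := by
              refine fGset_step_none f hwT (Or.inl ?_)
              rw [upd_apply, if_pos rfl, if_neg huR]
              rw [hval, if_neg huR] at hAw
              exact hAw
            rw [e1, e2] at hIH
            exact hIH
          by_cases huB : u ∈ Bset
          · simp only [if_pos hwR, if_neg huR, if_pos huB, Option.map_none,
              Option.toList_none, List.nil_append]
            exact hnoemit (by rw [hval, if_neg huR, if_pos huB])
          · have huT : u ∈ T := (htok.blueSub hu).resolve_left huB
            cases hAu : A u with
            | none =>
                simp only [if_pos hwR, if_neg huR, if_neg huB, hAu, Option.map_none,
                  Option.toList_none, List.nil_append]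
                exact hnoemit (by rw [hval, if_neg huR, if_neg huB]; exact hAu)
            | some p =>
                obtain ⟨hpblue, hpR, hpnbrs⟩ := hchain u huT huR p hAu
                simp only [if_pos hwR, if_neg huR, if_neg huB, hAu, Option.map_some,
                  Option.toList_some, List.singleton_append]
                refine ⟨⟨?_, ?_, ?_, ?_⟩, ?_⟩
                · exact hsub (g p) (by rw [hfg p hpR]; exact hpblue)
                · intro hc
                  rcases hc with hc | hc
                  · rw [hB'] at hc
                    rcases hc with hc | hc
                    · exact hw (htok.bSub (by rw [← hfg w hwR]; exact hc))
                    · have : Afull w = none := by rw [← hfg w hwR]; exact hc.2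
                      rw [hval, if_neg huR, if_neg huB, hAu] at this
                      exact Option.some_ne_none p this
                  · exact hwT (by rw [← hfg w hwR]; exact hc)
                · rintro ⟨x, hxT, hxR, hxA⟩
                  rw [hfg p hpR] at hxA
                  have h1 : Holds (Set.range f) Bset forced T A p x :=
                    ⟨hxT, hxA, Or.inl (Or.inl hxR)⟩
                  have h2 : Holds (Set.range f) Bset forced T A p u :=
                    ⟨huT, hAu, Or.inr hufo⟩
                  exact huR (htok.uniq p x u h1 h2 ▸ hxR)
                · right
                  intro x hx
                  have hadj : H.Adj p (f x) := by
                    rw [← hfg p hpR]; exact f.map_adj hx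
                  exact hsub x (hpnbrs (f x) hadj ⟨x, rfl⟩)
                · have e1 : B' ∪ f ⁻¹' (insert w T) = insert (g w) (B' ∪ f ⁻¹' T) := by
                    rw [preim_insert_mem f g hgf hfg hwR, Set.union_insert]
                  have e2 : fGset f (insert w T) (upd (Set.range f) Bset A (u, w)) =
                      insert (g p) (fGset f T A) := by
                    refine fGset_step_some f g hgf hfg hwT hwR ?_ hpR
                    rw [upd_apply, if_pos rfl, if_neg huR, if_neg huB]
                    exact hAu
                  rw [e1, e2] at hIH
                  exact hIH
      · simp only [if_neg hwR, Option.map_none, Option.toList_none, List.nil_append]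
        have e1 : B' ∪ f ⁻¹' (insert w T) = B' ∪ f ⁻¹' T := by
          rw [preim_insert_not_mem f hwR]
        have e2 : fGset f (insert w T) (upd (Set.range f) Bset A (u, w)) = fGset f T A :=
          fGset_step_none f hwT (Or.inr hwR)
        rw [e1, e2] at hIH
        exact hIH
end Trans4


section BlueAt
variable {X : SimpleGraph α} {F : Set (α × α)} {b : Set α}

lemma zfBlueAt_succ_mono (t : ℕ) : zfBlueAt X F b t ⊆ zfBlueAt X F b (t + 1) :=
  Set.subset_union_left

lemma zfBlueAt_mono_s4 {s t : ℕ} (h : s ≤ t) : zfBlueAt X F b s ⊆ zfBlueAt X F b t := by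
  induction h with
  | refl => exact subset_rfl
  | step _ ih => exact ih.trans (zfBlueAt_succ_mono _)

lemma zfBlueAt_entry :
    ∀ (t : ℕ) (w : α), w ∈ zfBlueAt X F b t → w ∉ b →
      ∃ s, s < t ∧ ∃ x, (x, w) ∈ F ∧ x ∈ zfBlueAt X F b s ∧ w ∉ zfBlueAt X F b s ∧
        ((X.Adj x w ∧ ∀ y, X.Adj x y → y ∉ zfBlueAt X F b s → y = w) ∨
          ∀ y, X.Adj x y → y ∈ zfBlueAt X F b s)
  | 0, w => fun hw hwb => absurd hw hwb
  | t + 1, w => by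
      intro hw hwb
      rcases hw with hw | hw
      · obtain ⟨s, hs, rest⟩ := zfBlueAt_entry t w hw hwb
        exact ⟨s, hs.trans (Nat.lt_succ_self _), rest⟩
      · obtain ⟨x, hxF, hxb, hwb', _, hcond⟩ := hw
        exact ⟨t, Nat.lt_succ_self _, x, hxF, hxb, hwb', hcond⟩

end BlueAt

section Trans5
open scoped Classical

variable {V W : Type*} {G : SimpleGraph V} {H : SimpleGraph W}

lemma chainAt (f : G →g H) (Bset : Set W) (L : List (W × W)) (hL : zfValidList H Bset ∅ L)
    (F : Set (W × W)) (hF : F = {p | p ∈ L}) :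
    ∀ (t : ℕ) (u : W), u ∈ zfBlueAt H F Bset t → u ∉ Set.range f → u ∉ Bset →
      ∀ p, foldU (Set.range f) Bset (fun _ => none) L u = some p →
        p ∈ Set.range f ∧ p ∈ zfBlueAt H F Bset t ∧
          ∀ y, H.Adj p y → y ∈ Set.range f → y ∈ zfBlueAt H F Bset t := by
  intro t
  induction t using Nat.strong_induction_on with
  | _ t ihs =>
      intro u hu huR huB p hp
      obtain ⟨s, hst, x, hxF, hxblue, _hublue, hcond⟩ := zfBlueAt_entry t u hu huB
      have hxL : (x, u) ∈ L := by rw [hF] at hxF; exact hxF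
      have hstep := foldU_value_at (C := Set.range f) (A₀ := fun _ => none) hL hxL
      rw [hstep] at hp
      by_cases hxR : x ∈ Set.range f
      · rw [if_pos hxR, Option.some_inj] at hp
        subst hp
        refine ⟨hxR, zfBlueAt_mono_s4 hst.le hxblue, fun y hady hyR => ?_⟩
        rcases hcond with ⟨hadj, huniq⟩ | hall
        · by_cases hyb : y ∈ zfBlueAt H F Bset s
          · exact zfBlueAt_mono_s4 hst.le hyb
          · exact absurd hyR ((huniq y hady hyb) ▸ huR)
        · exact zfBlueAt_mono_s4 hst.le (hall y hady)
      · by_cases hxB : x ∈ Bset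
        · rw [if_neg hxR, if_pos hxB] at hp
          exact absurd hp (by simp)
        · rw [if_neg hxR, if_neg hxB] at hp
          obtain ⟨h1, h2, h3⟩ := ihs s hst x hxblue hxR hxB p hp
          exact ⟨h1, zfBlueAt_mono_s4 hst.le h2,
            fun y hy hyR => zfBlueAt_mono_s4 hst.le (h3 y hy hyR)⟩

lemma mainBlue (f : G →g H) (g : W → V) (hgf : ∀ v, g (f v) = v)
    (hfg : ∀ w, w ∈ Set.range f → f (g w) = w)
    (Bset : Set W) (L : List (W × W)) (hL : zfValidList H Bset ∅ L)
    (F : Set (W × W)) (hF : F = {p | p ∈ L})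
    (B' : Set V)
    (hBsub : f ⁻¹' Bset ⊆ B')
    (hUsub : ∀ v : V, (∃ x, (x, f v) ∈ L) →
      foldU (Set.range f) Bset (fun _ => none) L (f v) = none → v ∈ B')
    (L'' : List (V × V))
    (hglsub : ∀ q ∈ glAux (Set.range f) Bset g (fun _ => none) L, q ∈ L'')
    (hnodupF : (L''.map Prod.fst).Nodup)
    (F'' : Set (V × V)) (hF'' : F'' = {p | p ∈ L''}) :
    ∀ (t : ℕ) (v : V), f v ∈ zfBlueAt H F Bset t → v ∈ zfBlueAt G F'' B' t := by
  have hndt : (L.map Prod.snd).Nodup := zf_targets_nodup L _ _ hL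
  intro t
  induction t with
  | zero => exact fun v hv => hBsub hv
  | succ t ih =>
      intro v hv
      rcases hv with hv | hv
      · exact zfBlueAt_succ_mono t (ih v hv)
      · obtain ⟨u, huF, hublue, hfvblue, _hfo, hcond⟩ := hv
        have huL : (u, f v) ∈ L := by rw [hF] at huF; exact huF
        have hAval := foldU_value_at (C := Set.range f) (A₀ := fun _ => none) hL huL
        by_cases hvG : v ∈ zfBlueAt G F'' B' t
        · exact zfBlueAt_succ_mono t hvG
        · by_cases huR : u ∈ Set.range f
          · have hAfv : foldU (Set.range f) Bset (fun _ => none) L (f v) = some u := by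
              rw [hAval, if_pos huR]
            have hglmem := glAux_mem (fR := Set.range f) (Bset := Bset) (g := g) L
              (fun _ => none) hndt huL (Set.mem_range_self v) hAfv
            rw [hgf v] at hglmem
            have haF'' : (g u, v) ∈ F'' := by rw [hF'']; exact hglsub _ hglmem
            refine Or.inr ⟨g u, haF'', ih (g u) (by rw [hfg u huR]; exact hublue), hvG,
              ?_, ?_⟩
            · intro w' hw' hbw'
              have : w' = v := nodup_fst_unique_snd hnodupF
                (by rw [hF''] at hw'; exact hw') (by rw [hF''] at haF''; exact haF'')
              exact absurd (this ▸ hbw') hvG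
            · have hcond' := hcond
              rw [← hfg u huR] at hcond'
              exact cond_map f g hgf (fun x hx => ih x hx) (g u) v hcond'
          · by_cases huB : u ∈ Bset
            · have hvB : v ∈ B' := hUsub v ⟨u, huL⟩ (by rw [hAval, if_neg huR, if_pos huB])
              exact zfBlueAt_mono_s4 (Nat.zero_le (t + 1)) hvB
            · cases hAu : foldU (Set.range f) Bset (fun _ => none) L u with
              | none =>
                  have hvB : v ∈ B' := hUsub v ⟨u, huL⟩
                    (by rw [hAval, if_neg huR, if_neg huB]; exact hAu)
                  exact zfBlueAt_mono_s4 (Nat.zero_le (t + 1)) hvB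
              | some p =>
                  obtain ⟨hpR, hpblue, hpnbrs⟩ :=
                    chainAt f Bset L hL F hF t u hublue huR huB p hAu
                  have hAfv : foldU (Set.range f) Bset (fun _ => none) L (f v) = some p := by
                    rw [hAval, if_neg huR, if_neg huB]; exact hAu
                  have hglmem := glAux_mem (fR := Set.range f) (Bset := Bset) (g := g) L
                    (fun _ => none) hndt huL (Set.mem_range_self v) hAfv
                  rw [hgf v] at hglmem
                  have haF'' : (g p, v) ∈ F'' := by rw [hF'']; exact hglsub _ hglmem
                  refine Or.inr ⟨g p, haF'',
                    ih (g p) (by rw [hfg p hpR]; exact hpblue), hvG, ?_, ?_⟩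
                  · intro w' hw' hbw'
                    have : w' = v := nodup_fst_unique_snd hnodupF
                      (by rw [hF''] at hw'; exact hw') (by rw [hF''] at haF''; exact haF'')
                    exact absurd (this ▸ hbw') hvG
                  · refine Or.inr fun x hx => ih x (hpnbrs (f x) ?_ ⟨x, rfl⟩)
                    rw [← hfg p hpR]
                    exact f.map_adj hx

end Trans5

section Trans6
open scoped Classical

variable {V W : Type*} {G : SimpleGraph V} {H : SimpleGraph W}

lemma tok_init (C K Bset : Set W) : TokInv C K Bset Bset ∅ ∅ (fun _ => none) := by
  refine ⟨Set.empty_subset _, Set.subset_union_left, subset_rfl, Set.empty_subset _,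
    ?_, ?_, ?_, ?_⟩
  · intro x hx; exact absurd rfl hx
  · intro x p h; exact absurd h (by simp)
  · intro p x y hx _; exact absurd hx.1 (Set.notMem_empty x)
  · intro p _ x hx; exact absurd hx.1 (Set.notMem_empty x)

lemma chain_init (R Bset : Set W) : ChainInvP H R Bset ∅ (fun _ => none) :=
  fun x hx => absurd hx (Set.notMem_empty x)

lemma ans_init (R Bset : Set W) :
    AnsInvP Bset R Bset ∅ (fun _ => none) (fun _ => none) :=
  fun x hx => absurd hx (Set.notMem_empty x)

lemma cardB' [Fintype V] [Fintype W] (f : G →g H) (hfinj : Function.Injective f)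
    (Bset : Set W) (L : List (W × W)) (hL : zfValidList H Bset ∅ L) :
    ((f ⁻¹' Bset) ∪ {v | (∃ x, (x, f v) ∈ L) ∧
        foldU (Set.range f) Bset (fun _ => none) L (f v) = none}).ncard ≤ Bset.ncard := by
  set R := Set.range f with hR
  set U := {v | (∃ x, (x, f v) ∈ L) ∧
      foldU (Set.range f) Bset (fun _ => none) L (f v) = none} with hU
  set Sfull := foldU (Bset \ R) R (fun _ => none) L with hSfull
  obtain ⟨_, htokS, _, hans⟩ := ginv_fold L Bset ∅ ∅ (fun _ => none) (fun _ => none) hL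
    (tok_init R Bset Bset) (tok_init (Bset \ R) R Bset) (chain_init R Bset)
    (ans_init R Bset)
  have hTeq : fBlue (∅ : Set W) L = {w | ∃ x, (x, w) ∈ L} := by
    rw [fBlue_eq]; exact Set.empty_union _
  have key : ∀ v ∈ U, ∃ b, Sfull (f v) = some b ∧ b ∈ Bset \ R := by
    rintro v ⟨⟨x, hx⟩, hnone⟩
    have hfvT : f v ∈ fBlue (∅ : Set W) L := by rw [hTeq]; exact ⟨x, hx⟩
    have hfvB : f v ∉ Bset := zf_targets_not_blue L _ _ hL (x, f v) hx
    exact hans (f v) hfvT hfvB hnone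
  have h3 : U.ncard ≤ (Bset \ R).ncard := by
    refine Set.ncard_le_ncard_of_injOn (fun v => (Sfull (f v)).getD (f v)) ?_ ?_
      (Set.toFinite _)
    · intro v hv
      obtain ⟨b, hb, hbB⟩ := key v hv
      show (Sfull (f v)).getD (f v) ∈ Bset \ R
      rw [hb, Option.getD_some]
      exact hbB
    · intro v₁ h₁ v₂ h₂ heq
      obtain ⟨b₁, hb₁, hbB₁⟩ := key v₁ h₁
      obtain ⟨b₂, hb₂, hbB₂⟩ := key v₂ h₂
      have heq' : (Sfull (f v₁)).getD (f v₁) = (Sfull (f v₂)).getD (f v₂) := heq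
      rw [hb₁, hb₂, Option.getD_some, Option.getD_some] at heq'
      subst heq'
      have hfvT₁ : f v₁ ∈ fBlue (∅ : Set W) L := by rw [hTeq]; exact ⟨h₁.1.choose, h₁.1.choose_spec⟩
      have hfvT₂ : f v₂ ∈ fBlue (∅ : Set W) L := by rw [hTeq]; exact ⟨h₂.1.choose, h₂.1.choose_spec⟩
      have hh1 : Holds (Bset \ R) R (fForced ∅ L) (fBlue ∅ L) Sfull b₁ (f v₁) :=
        ⟨hfvT₁, hb₁, Or.inl (Set.mem_union_right _ (Set.mem_range_self v₁))⟩
      have hh2 : Holds (Bset \ R) R (fForced ∅ L) (fBlue ∅ L) Sfull b₁ (f v₂) :=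
        ⟨hfvT₂, hb₂, Or.inl (Set.mem_union_right _ (Set.mem_range_self v₂))⟩
      exact hfinj (htokS.uniq b₁ (f v₁) (f v₂) hh1 hh2)
  have h2 : (f ⁻¹' Bset).ncard = (Bset ∩ R).ncard := by
    rw [← Set.image_preimage_eq_inter_range (f := f) (t := Bset)]
    exact (Set.ncard_image_of_injective _ hfinj).symm
  calc ((f ⁻¹' Bset) ∪ U).ncard ≤ (f ⁻¹' Bset).ncard + U.ncard := Set.ncard_union_le _ _
    _ ≤ (Bset ∩ R).ncard + (Bset \ R).ncard := by rw [h2]; exact Nat.add_le_add_left h3 _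
    _ = Bset.ncard := Set.ncard_inter_add_ncard_diff_eq_ncard _ _

lemma fBlue_append (b : Set W) (L₁ L₂ : List (W × W)) :
    fBlue b (L₁ ++ L₂) = fBlue (fBlue b L₁) L₂ := by
  simp [fBlue, List.foldl_append]

lemma fForced_append (fo : Set W) (L₁ L₂ : List (W × W)) :
    fForced fo (L₁ ++ L₂) = fForced (fForced fo L₁) L₂ := by
  simp [fForced, List.foldl_append]

end Trans6


section Assembly
open scoped Classical

/-- the `⌊Z⌋` throttling number is subgraph monotone. -/
theorem stmt4 {V W : Type*} [Fintype V] [Fintype W] (G : SimpleGraph V) (H : SimpleGraph W)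
    (f : G →g H) (hf : Function.Injective f) :
    thZFgraph G ≤ thZFgraph H := by
  classical
  rcases isEmpty_or_nonempty V with hVempty | hV
  · have hforce : IsZFForceSet G ∅ (∅ : Set (V × V)) := by
      refine ⟨[], trivial, fun u w h => (IsEmpty.false u).elim, ?_⟩
      ext p
      simp
    have hpt0 : ptZFofF G (∅ : Set (V × V)) (∅ : Set V) = 0 := by
      refine le_antisymm ?_ zero_le
      apply sInf_le
      refine ⟨0, by simp, ?_⟩
      show (∅ : Set V) = Set.univ
      exact (Set.univ_eq_empty_iff.2 hVempty).symm
    have hptZF0 : ptZF G (∅ : Set V) = 0 :=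
      le_antisymm (sInf_le ⟨∅, hforce, hpt0.symm⟩) zero_le
    have h2 : thZF G (∅ : Set V) = 0 := by
      unfold thZF
      rw [hptZF0, Set.ncard_empty, Nat.cast_zero, add_zero]
    have h1 : thZFgraph G ≤ thZF G (∅ : Set V) := sInf_le ⟨∅, rfl⟩
    rw [h2] at h1
    exact h1.trans zero_le
  · have hgf : ∀ v, Function.invFun f (f v) = v := Function.leftInverse_invFun hf
    set g := Function.invFun f with hg
    have hfg : ∀ w, w ∈ Set.range f → f (g w) = w := fun w hw => Function.invFun_eq hw
    apply le_sInf
    rintro n ⟨Bs, rfl⟩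
    rcases Set.eq_empty_or_nonempty
      {n : ℕ∞ | ∃ F, IsZFForceSet H Bs F ∧ n = ptZFofF H F Bs} with hS | hS
    · have htop : ptZF H Bs = ⊤ := by unfold ptZF; rw [hS, sInf_empty]
      have : thZF H Bs = ⊤ := by unfold thZF; rw [htop, add_top]
      rw [this]
      exact le_top
    · obtain ⟨F, hFset, hFpt⟩ := csInf_mem hS
      have hptZF : ptZF H Bs = ptZFofF H F Bs := hFpt
      rcases Set.eq_empty_or_nonempty
        {n : ℕ∞ | ∃ t : ℕ, n = (t : ℕ∞) ∧ zfBlueAt H F Bs t = Set.univ} with hS2 | hS2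
      · have htop : ptZFofF H F Bs = ⊤ := by unfold ptZFofF; rw [hS2, sInf_empty]
        have : thZF H Bs = ⊤ := by unfold thZF; rw [hptZF, htop, add_top]
        rw [this]
        exact le_top
      · obtain ⟨T, hTeq, hTuniv⟩ := csInf_mem hS2
        have hTback : ptZFofF H F Bs = (T : ℕ∞) := hTeq
        obtain ⟨L, hL, hmaxH, hFdef⟩ := hFset
        set A0 : W → Option W := fun _ => none with hA0
        set Afull := foldU (Set.range f) Bs A0 L with hAfullDef
        set U := {v : V | (∃ x, (x, f v) ∈ L) ∧ Afull (f v) = none} with hUdef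
        set B' := (f ⁻¹' Bs) ∪ U with hB'def
        have hB'eq : B' = (f ⁻¹' Bs) ∪
            {v | f v ∈ {w | ∃ x, (x, w) ∈ L} ∧ Afull (f v) = none} := rfl
        have hTf : ∀ p ∈ L, p.2 ∈ {w | ∃ x, (x, w) ∈ L} := by
          intro p hp
          obtain ⟨a, b⟩ := p
          exact ⟨a, hp⟩
        have hvd := vd f g hgf hfg Bs {w | ∃ x, (x, w) ∈ L} Afull B' hB'eq L Bs ∅ ∅ A0
          hL (tok_init _ _ _) (chain_init _ _) rfl hTf
        have hvd' : zfValidList G B' ∅ (glAux (Set.range f) Bs g A0 L) := by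
          have e1 : B' ∪ f ⁻¹' (∅ : Set W) = B' := by
            rw [Set.preimage_empty, Set.union_empty]
          have e2 : fGset f (∅ : Set W) A0 = ∅ := by
            ext v
            simp [fGset]
          rw [e1, e2] at hvd
          exact hvd
        set gList := glAux (Set.range f) Bs g A0 L with hgListDef
        obtain ⟨L₁, hL₁, hmaxG⟩ := exists_maximal_ext G
          ((Set.univ \ fBlue B' gList).ncard) (fBlue B' gList) (fForced ∅ gList) rfl
        set L'' := gList ++ L₁ with hL''def
        have hvalidL'' : zfValidList G B' ∅ L'' :=
          (zfValidList_append gList L₁ B' ∅).2 ⟨hvd', hL₁⟩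
        set F'' : Set (V × V) := {p | p ∈ L''} with hF''def
        have hforceset : IsZFForceSet G B' F'' := by
          refine ⟨L'', hvalidL'', ?_, rfl⟩
          intro u w
          have e1 : endBlue B' L'' = fBlue (fBlue B' gList) L₁ := by
            rw [show endBlue B' L'' = fBlue B' L'' from (fBlue_eq L'' B').symm, hL''def,
              fBlue_append]
          have e2 : endForced L'' = fForced (fForced ∅ gList) L₁ := by
            have : endForced L'' = fForced ∅ L'' := by
              rw [fForced_eq]
              exact (Set.empty_union _).symm
            rw [this, hL''def, fForced_append]
          rw [e1, e2]
          exact hmaxG u w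
        have hnodupF'' := zf_forcers_nodup L'' _ _ hvalidL''
        have hmain := mainBlue f g hgf hfg Bs L hL F hFdef B' (fun v hv => Or.inl hv)
          (fun v hx hnone => Or.inr ⟨hx, hnone⟩) L''
          (fun q hq => List.mem_append_left _ hq) hnodupF'' F'' rfl
        have hunivG : zfBlueAt G F'' B' T = Set.univ :=
          Set.eq_univ_of_forall fun v => hmain T v (by rw [hTuniv]; trivial)
        have hcard : B'.ncard ≤ Bs.ncard := cardB' f hf Bs L hL
        have hpt1 : ptZF G B' ≤ ptZFofF G F'' B' := sInf_le ⟨F'', hforceset, rfl⟩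
        have hpt2 : ptZFofF G F'' B' ≤ (T : ℕ∞) := sInf_le ⟨T, rfl, hunivG⟩
        calc thZFgraph G ≤ thZF G B' := sInf_le ⟨B', rfl⟩
          _ ≤ (Bs.ncard : ℕ∞) + ptZF H Bs := by
              unfold thZF
              rw [hptZF, hTback]
              exact add_le_add (Nat.cast_le.2 hcard) (hpt1.trans hpt2)

end Assembly

end ZFT
end

section
/- If G is a finite simple graph of order n, then th_⌊Z⌋(G) ≥ ⌈2√n − 1⌉. -/
open SimpleGraph

namespace ZFT

variable {V : Type*} {α : Type*} {β : Type*}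

section Aux

open Classical in
/-- Helper: to bound `c ≤ k + sInf S` in `ℕ∞`, it suffices to bound against every member. -/
lemma le_add_sInf' {c k : ℕ∞} {S : Set ℕ∞} (h : ∀ a ∈ S, c ≤ k + a) : c ≤ k + sInf S := by
  rcases S.eq_empty_or_nonempty with rfl | hS
  · simp
  · obtain ⟨m, hm, hmin⟩ := (wellFounded_lt (α := ℕ∞)).has_min S hS
    have : sInf S = m := le_antisymm (sInf_le hm) (le_sInf fun b hb => not_lt.mp (hmin b hb))
    rw [this]; exact h m hm

lemma ceil_bound' (n b t : ℕ) (h : n ≤ b * (t + 1)) :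
    (⌈2 * Real.sqrt n - 1⌉).toNat ≤ b + t := by
  rcases Nat.eq_zero_or_pos n with rfl | hn
  · have h1 : (2 * Real.sqrt ((0:ℕ):ℝ) - 1 : ℝ) = ((-1 : ℤ) : ℝ) := by norm_num
    rw [h1, Int.ceil_intCast]
    omega
  · have hb : 1 ≤ b := by nlinarith
    rw [Int.toNat_le, Int.ceil_le]
    push_cast
    have h1 : Real.sqrt n ≤ Real.sqrt (b * (t+1)) := Real.sqrt_le_sqrt (by exact_mod_cast h)
    have h2 : Real.sqrt ((b : ℝ) * (t+1)) = Real.sqrt b * Real.sqrt (t+1) :=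
      Real.sqrt_mul (by positivity) _
    have h3 : (Real.sqrt b)^2 = (b : ℝ) := Real.sq_sqrt (by positivity)
    have h4 : (Real.sqrt ((t : ℝ)+1))^2 = ((t : ℝ)+1) := Real.sq_sqrt (by positivity)
    have h5 : (0:ℝ) ≤ Real.sqrt b := Real.sqrt_nonneg _
    have h6 : (0:ℝ) ≤ Real.sqrt ((t:ℝ)+1) := Real.sqrt_nonneg _
    nlinarith [sq_nonneg (Real.sqrt b - Real.sqrt ((t:ℝ)+1))]

variable {W : Type*}

/-- In a valid `⌊Z⌋` force list, sources avoid `forced` and targets avoid `blue`. -/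
lemma zfValidList_avoid (G : SimpleGraph W) :
    ∀ (L : List (W × W)) (blue forced : Set W), zfValidList G blue forced L →
      ∀ p ∈ L, p.1 ∉ forced ∧ p.2 ∉ blue := by
  intro L
  induction L with
  | nil => intro blue forced _ p hp; simp at hp
  | cons q L ih =>
    intro blue forced hv p hp
    obtain ⟨hq, hrest⟩ := hv
    rcases List.mem_cons.mp hp with rfl | hp
    · exact ⟨hq.2.2.1, hq.2.1⟩
    · have := ih _ _ hrest p hp
      exact ⟨fun hmem => this.1 (Set.mem_insert_of_mem _ hmem),
             fun hmem => this.2 (Set.mem_insert_of_mem _ hmem)⟩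

lemma zfValidList_fst_inj (G : SimpleGraph W) :
    ∀ (L : List (W × W)) (blue forced : Set W), zfValidList G blue forced L →
      ∀ p ∈ L, ∀ q ∈ L, p.1 = q.1 → p = q := by
  intro L
  induction L with
  | nil => intro blue forced _ p hp; simp at hp
  | cons r L ih =>
    intro blue forced hv p hp q hq hpq
    obtain ⟨hr, hrest⟩ := hv
    rcases List.mem_cons.mp hp with rfl | hp2
    · rcases List.mem_cons.mp hq with rfl | hq2
      · rfl
      · have hmem : q.1 ∈ insert p.1 forced := by rw [← hpq]; exact Set.mem_insert _ _
        exact absurd hmem (zfValidList_avoid G L _ _ hrest q hq2).1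
    · rcases List.mem_cons.mp hq with rfl | hq2
      · have hmem : p.1 ∈ insert q.1 forced := by rw [hpq]; exact Set.mem_insert _ _
        exact absurd hmem (zfValidList_avoid G L _ _ hrest p hp2).1
      · exact ih _ _ hrest p hp2 q hq2 hpq

lemma zfValidList_snd_inj (G : SimpleGraph W) :
    ∀ (L : List (W × W)) (blue forced : Set W), zfValidList G blue forced L →
      ∀ p ∈ L, ∀ q ∈ L, p.2 = q.2 → p = q := by
  intro L
  induction L with
  | nil => intro blue forced _ p hp; simp at hp
  | cons r L ih =>
    intro blue forced hv p hp q hq hpq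
    obtain ⟨hr, hrest⟩ := hv
    rcases List.mem_cons.mp hp with rfl | hp2
    · rcases List.mem_cons.mp hq with rfl | hq2
      · rfl
      · have hmem : q.2 ∈ insert p.2 blue := by rw [← hpq]; exact Set.mem_insert _ _
        exact absurd hmem (zfValidList_avoid G L _ _ hrest q hq2).2
    · rcases List.mem_cons.mp hq with rfl | hq2
      · have hmem : p.2 ∈ insert q.2 blue := by rw [hpq]; exact Set.mem_insert _ _
        exact absurd hmem (zfValidList_avoid G L _ _ hrest p hp2).2
      · exact ih _ _ hrest p hp2 q hq2 hpq

/-- Key counting lemma: if the `⌊Z⌋` forces of `F` (a partial bijection) color all of a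
finite vertex set by time `t` starting from `B`, then `|V| ≤ |B|(t+1)`. -/
lemma card_le_of_zfBlueAt [Fintype W] (G : SimpleGraph W) (B : Set W) (F : Set (W × W))
    (hfst : ∀ v w w', (v, w) ∈ F → (v, w') ∈ F → w = w')
    (hsnd : ∀ v v' w, (v, w) ∈ F → (v', w) ∈ F → v = v')
    (t : ℕ) (ht : zfBlueAt G F B t = Set.univ) :
    Fintype.card W ≤ B.ncard * (t + 1) := by
  classical
  set blue : ℕ → Set W := zfBlueAt G F B with hblue
  have hstepdef : ∀ s, blue (s+1) = blue s ∪
      {w | ∃ v, (v, w) ∈ F ∧ v ∈ blue s ∧ w ∉ blue s ∧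
        (∀ w', (v, w') ∈ F → w' ∈ blue s → w' ∈ B) ∧
        ((G.Adj v w ∧ ∀ x, G.Adj v x → x ∉ blue s → x = w) ∨
          ∀ x, G.Adj v x → x ∈ blue s)} := fun s => rfl
  have hzero : blue 0 = B := rfl
  have hmono : ∀ s, blue s ⊆ blue (s+1) := by
    intro s
    rw [hstepdef s]; exact Set.subset_union_left
  have hBsub : ∀ s, B ⊆ blue s := by
    intro s
    induction s with
    | zero => rw [hzero]
    | succ s ih => exact ih.trans (hmono s)
  -- forcer function
  let f : W → W := fun w => if h : ∃ v, (v, w) ∈ F then h.choose else w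
  have hf : ∀ v w, (v, w) ∈ F → f w = v := by
    intro v w hvw
    have hex : ∃ v, (v, w) ∈ F := ⟨v, hvw⟩
    simp only [f, dif_pos hex]
    exact hsnd _ _ _ hex.choose_spec hvw
  -- every blue non-initial vertex has a forcer, which is blue
  have hforcer : ∀ s w, w ∈ blue s → w ∉ B → (f w, w) ∈ F ∧ f w ∈ blue s := by
    intro s
    induction s with
    | zero => intro w hw hwB; exact absurd (hzero ▸ hw) hwB
    | succ s ih =>
      intro w hw hwB
      rw [hstepdef s] at hw
      rcases hw with hw | hw
      · obtain ⟨h1, h2⟩ := ih w hw hwB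
        exact ⟨h1, hmono s h2⟩
      · obtain ⟨v, hvF, hvb, -, -, -⟩ := hw
        rw [hf v w hvF]
        exact ⟨hvF, hmono s hvb⟩
  -- the set of used forcers
  let U : ℕ → Set W := fun s => {v | ∃ w, (v, w) ∈ F ∧ w ∈ blue s ∧ w ∉ B}
  have hUsub : ∀ s, U s ⊆ blue s := by
    rintro s v ⟨w, hvF, hwb, hwB⟩
    have := (hforcer s w hwb hwB).2
    rwa [hf v w hvF] at this
  -- |blue s| ≤ |B| + |U s|
  have hcardU : ∀ s, (blue s).ncard ≤ B.ncard + (U s).ncard := by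
    intro s
    have hsplit : blue s ⊆ B ∪ (blue s \ B) := by
      intro x hx
      by_cases hxB : x ∈ B
      · exact Or.inl hxB
      · exact Or.inr ⟨hx, hxB⟩
    calc (blue s).ncard ≤ (B ∪ (blue s \ B)).ncard :=
          Set.ncard_le_ncard hsplit (Set.toFinite _)
      _ ≤ B.ncard + (blue s \ B).ncard := Set.ncard_union_le _ _
      _ ≤ B.ncard + (U s).ncard := by
          apply Nat.add_le_add_left
          refine Set.ncard_le_ncard_of_injOn f ?_ ?_ ?_
          · rintro w ⟨hwb, hwB⟩
            exact ⟨w, (hforcer s w hwb hwB).1, hwb, hwB⟩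
          · rintro w1 ⟨h1b, h1B⟩ w2 ⟨h2b, h2B⟩ heq
            have hw1 := (hforcer s w1 h1b h1B).1
            have hw2 := (hforcer s w2 h2b h2B).1
            rw [heq] at hw1
            exact hfst _ _ _ hw1 hw2
          · exact Set.toFinite _
  -- per-step growth is at most |B|
  have hstep : ∀ s, (blue (s+1)).ncard ≤ (blue s).ncard + B.ncard := by
    intro s
    have hnew : (blue (s+1) \ blue s).ncard ≤ (blue s \ U s).ncard := by
      refine Set.ncard_le_ncard_of_injOn f ?_ ?_ ?_
      · rintro w ⟨hw1, hw0⟩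
        rw [hstepdef s] at hw1
        rcases hw1 with hw1 | hw1
        · exact absurd hw1 hw0
        obtain ⟨v, hvF, hvb, -, hvused, -⟩ := hw1
        rw [hf v w hvF]
        refine ⟨hvb, ?_⟩
        rintro ⟨w', hw'F, hw'b, hw'B⟩
        exact hw'B (hvused w' hw'F hw'b)
      · rintro w1 ⟨h1b, h1B⟩ w2 ⟨h2b, h2B⟩ heq
        have hfw : ∀ w, w ∈ blue (s+1) → w ∉ blue s → (f w, w) ∈ F := by
          intro w hw1 hw0
          rw [hstepdef s] at hw1
          rcases hw1 with hw1 | hw1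
          · exact absurd hw1 hw0
          obtain ⟨v, hvF, -⟩ := hw1
          rw [hf v w hvF]; exact hvF
        have hw1 := hfw w1 h1b h1B
        have hw2 := hfw w2 h2b h2B
        rw [heq] at hw1
        exact hfst _ _ _ hw1 hw2
      · exact Set.toFinite _
    have hdiff : (blue s \ U s).ncard = (blue s).ncard - (U s).ncard :=
      Set.ncard_diff (hUsub s) (Set.toFinite _)
    have h1 : (blue s \ U s).ncard ≤ B.ncard := by
      have := hcardU s
      omega
    have hsplit : blue (s+1) ⊆ blue s ∪ (blue (s+1) \ blue s) := by
      intro x hx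
      by_cases hxs : x ∈ blue s
      · exact Or.inl hxs
      · exact Or.inr ⟨hx, hxs⟩
    calc (blue (s+1)).ncard ≤ (blue s ∪ (blue (s+1) \ blue s)).ncard :=
          Set.ncard_le_ncard hsplit (Set.toFinite _)
      _ ≤ (blue s).ncard + (blue (s+1) \ blue s).ncard := Set.ncard_union_le _ _
      _ ≤ (blue s).ncard + B.ncard := by omega
  have hgrow : ∀ s, (blue s).ncard ≤ B.ncard * (s + 1) := by
    intro s
    induction s with
    | zero => rw [hzero]; omega
    | succ s ih =>
      have := hstep s
      calc (blue (s+1)).ncard ≤ (blue s).ncard + B.ncard := hstep s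
        _ ≤ B.ncard * (s+1) + B.ncard := by omega
        _ = B.ncard * (s+2) := by ring
  have := hgrow t
  rw [show blue t = Set.univ from ht] at this
  rwa [Set.ncard_univ, Nat.card_eq_fintype_card] at this

end Aux

/-- for a graph of order `n`, `th_⌊Z⌋(G) ≥ ⌈2√n − 1⌉`. -/
theorem stmt5 {V : Type*} [Fintype V] (G : SimpleGraph V) :
    ((⌈2 * Real.sqrt (Fintype.card V) - 1⌉).toNat : ℕ∞) ≤ thZFgraph G := by
  classical
  refine le_sInf ?_
  rintro x ⟨B, rfl⟩
  unfold thZF ptZF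
  refine le_add_sInf' ?_
  rintro a ⟨F, hF, rfl⟩
  unfold ptZFofF
  refine le_add_sInf' ?_
  rintro a ⟨t, rfl, hUniv⟩
  obtain ⟨L, hL, -, hFL⟩ := hF
  have hfst : ∀ v w w', (v, w) ∈ F → (v, w') ∈ F → w = w' := by
    intro v w w' h1 h2
    rw [hFL] at h1 h2
    have := zfValidList_fst_inj G L B ∅ hL (v, w) h1 (v, w') h2 rfl
    exact congrArg Prod.snd this
  have hsnd : ∀ v v' w, (v, w) ∈ F → (v', w) ∈ F → v = v' := by
    intro v v' w h1 h2
    rw [hFL] at h1 h2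
    have := zfValidList_snd_inj G L B ∅ hL (v, w) h1 (v', w) h2 rfl
    exact congrArg Prod.fst this
  have hcard := card_le_of_zfBlueAt G B F hfst hsnd t hUniv
  have hfinal := ceil_bound' (Fintype.card V) B.ncard t hcard
  have : ((B.ncard : ℕ∞) + (t : ℕ∞)) = ((B.ncard + t : ℕ) : ℕ∞) := by push_cast; rfl
  rw [this]
  exact_mod_cast hfinal

end ZFT
end
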